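/- arXiv:1405.7481 — 4 statements merged into one kernel-verified Lean document; each statement's English description precedes it below -/
import Mathlib

section
/- Let P and Q be finitely additive probabilities on ({0,1}^∞, Σ), where Σ contains all cylinders, and suppose P(ω^t) > 0 for every cylinder ω^t. If P merges with Q (i.e., for every ε > 0, Q({ω : sup_{E∈Σ} |P(E|ω^t) − Q(E|ω^t)| > ε}) → 0 as t → ∞), then Q is absolutely continuous with respect to P, in the sense that for every sequence of events (E_n), P(E_n) → 0 implies Q(E_n) → 0. -/
open Filter Topology


/-- A path in `{0,1}^∞`. -/
abbrev BinSeq := ℕ → Bool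

/-- The cylinder of length `t` with base `ω`: all sequences agreeing with `ω`
in the first `t` coordinates. -/
def cyl {X : Type*} (ω : ℕ → X) (t : ℕ) : Set (ℕ → X) := {ω' | ∀ i < t, ω' i = ω i}

/-- An algebra of subsets of `Ω`. -/
structure SetAlgebra (Ω : Type*) where
  sets : Set (Set Ω)
  univ_mem : Set.univ ∈ sets
  compl_mem : ∀ S ∈ sets, Sᶜ ∈ sets
  union_mem : ∀ S ∈ sets, ∀ T ∈ sets, S ∪ T ∈ sets

/-- The algebra is a σ-algebra: closed under countable unions. -/
def SetAlgebra.IsSigmaAlgebra {Ω : Type*} (A : SetAlgebra Ω) : Prop :=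
  ∀ f : ℕ → Set Ω, (∀ n, f n ∈ A.sets) → (⋃ n, f n) ∈ A.sets

/-- The power-set algebra. -/
def SetAlgebra.top (Ω : Type*) : SetAlgebra Ω :=
  ⟨Set.univ, trivial, fun _ _ => trivial, fun _ _ _ _ => trivial⟩

/-- A finitely additive probability on `(Ω, A)`.  The function `m` is defined on all
subsets for convenience; only its values on `A.sets` are constrained. -/
structure FA {Ω : Type*} (A : SetAlgebra Ω) where
  m : Set Ω → ℝ
  nonneg : ∀ S ∈ A.sets, 0 ≤ m S
  total : m Set.univ = 1
  add : ∀ S ∈ A.sets, ∀ T ∈ A.sets, Disjoint S T → m (S ∪ T) = m S + m T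

/-- Conditional probability `P(E | C) = P(E ∩ C) / P(C)`. -/
noncomputable def FA.cond {Ω : Type*} {A : SetAlgebra Ω} (P : FA A) (E C : Set Ω) : ℝ :=
  P.m (E ∩ C) / P.m C

/-- `Q` is absolutely continuous w.r.t. `P` (written `Q ≪ P` in the paper):
for every sequence of events, `P(Eₙ) → 0` implies `Q(Eₙ) → 0`. -/
def AbsCont {Ω : Type*} {A : SetAlgebra Ω} (P Q : FA A) : Prop :=
  ∀ E : ℕ → Set Ω, (∀ n, E n ∈ A.sets) →
    Tendsto (fun n => P.m (E n)) atTop (𝓝 0) → Tendsto (fun n => Q.m (E n)) atTop (𝓝 0)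

/-- `P` merges with `Q`: for every `ε > 0`, the `Q`-probability of the set of paths where
some event has conditional probabilities (given the first `t` coordinates) differing by
more than `ε` tends to `0` as `t → ∞`.  (`sup_E |P(E|ωᵗ) - Q(E|ωᵗ)| > ε` is expressed
equivalently as `∃ E`.) -/
def Merges {A : SetAlgebra BinSeq} (P Q : FA A) : Prop :=
  ∀ ε > 0, Tendsto
    (fun t => Q.m {ω | ∃ E ∈ A.sets, ε < |P.cond E (cyl ω t) - Q.cond E (cyl ω t)|})
    atTop (𝓝 0)

/-- Membership in the algebra `F` generated by the cylinders of `{0,1}^∞`: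
the finite unions of cylinders (the empty union giving `∅`). -/
def InCylAlg (S : Set BinSeq) : Prop :=
  ∃ (n : ℕ) (f : Fin n → BinSeq × ℕ), S = ⋃ i, cyl (f i).1 (f i).2

/-- `Q` agrees with `P` on the algebra generated by cylinders, i.e. `Q` is an
extension of `P_F` from `F` to `Σ`. -/
def ExtAgree {A : SetAlgebra BinSeq} (P Q : FA A) : Prop :=
  ∀ S, InCylAlg S → Q.m S = P.m S

/-- `P` is an extreme point of the set `E(P_F, F, Σ)` of extensions of its restriction
to the cylinder algebra: any representation of `P` as a nontrivial convex combination
of two extensions forces the two extensions to coincide (with `P`). -/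
def ExtremePoint {A : SetAlgebra BinSeq} (P : FA A) : Prop :=
  ∀ Q R : FA A, ExtAgree P Q → ExtAgree P R →
    ∀ α : ℝ, 0 < α → α < 1 →
      (∀ S ∈ A.sets, P.m S = α * Q.m S + (1 - α) * R.m S) →
      ∀ S ∈ A.sets, Q.m S = R.m S

/-- `P` is strongly nonatomic (Savagean): every event can be split in any proportion. -/
def StronglyNonatomic {Ω : Type*} {A : SetAlgebra Ω} (P : FA A) : Prop :=
  ∀ E ∈ A.sets, ∀ α : ℝ, 0 ≤ α → α ≤ 1 → ∃ F ∈ A.sets, F ⊆ E ∧ P.m F = α * P.m E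

/-- The Blackwell–Dubins property: `P` merges with every `Q ≪ P`. -/
def BDProp {A : SetAlgebra BinSeq} (P : FA A) : Prop :=
  ∀ Q : FA A, AbsCont P Q → Merges P Q

section AuxLemmas

variable {Ω : Type*} {A : SetAlgebra Ω}

lemma aux_inter_mem {S T : Set Ω} (hS : S ∈ A.sets) (hT : T ∈ A.sets) :
    S ∩ T ∈ A.sets := by
  have h := A.compl_mem _ (A.union_mem _ (A.compl_mem _ hS) _ (A.compl_mem _ hT))
  simpa [Set.compl_union, compl_compl] using h

lemma aux_empty_mem : (∅ : Set Ω) ∈ A.sets := by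
  have h := A.compl_mem _ A.univ_mem
  simpa using h

lemma aux_m_empty (P : FA A) : P.m ∅ = 0 := by
  have h := P.add Set.univ A.univ_mem ∅ aux_empty_mem (by simp)
  simp [P.total] at h
  linarith

lemma aux_m_mono (P : FA A) {S T : Set Ω} (hS : S ∈ A.sets) (hT : T ∈ A.sets)
    (hST : S ⊆ T) : P.m S ≤ P.m T := by
  have hd : T \ S ∈ A.sets := by
    have := aux_inter_mem hT (A.compl_mem _ hS)
    simpa [Set.diff_eq] using this
  have hadd := P.add S hS (T \ S) hd disjoint_sdiff_self_right
  rw [Set.union_diff_cancel hST] at hadd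
  have := P.nonneg _ hd
  linarith

lemma aux_m_sum (P : FA A) {ι : Type*} (F : Finset ι) (f : ι → Set Ω)
    (hf : ∀ i ∈ F, f i ∈ A.sets)
    (hd : (F : Set ι).PairwiseDisjoint f) :
    (⋃ i ∈ F, f i) ∈ A.sets ∧ P.m (⋃ i ∈ F, f i) = ∑ i ∈ F, P.m (f i) := by
  classical
  induction F using Finset.cons_induction with
  | empty => simp [aux_empty_mem, aux_m_empty]
  | cons a F ha ih =>
    have hf' : ∀ i ∈ F, f i ∈ A.sets := fun i hi => hf i (Finset.mem_cons_of_mem hi)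
    have hd' : (F : Set ι).PairwiseDisjoint f :=
      hd.subset (by simp [Finset.coe_cons, Set.subset_insert])
    obtain ⟨hmem, hsum⟩ := ih hf' hd'
    have hdisj : Disjoint (f a) (⋃ i ∈ F, f i) := by
      rw [Set.disjoint_iUnion₂_right]
      intro i hi
      exact hd (Finset.mem_cons_self a F) (Finset.mem_cons_of_mem hi)
        (fun h => ha (h ▸ hi))
    have hU : (⋃ i ∈ Finset.cons a F ha, f i) = f a ∪ ⋃ i ∈ F, f i := by
      simp [Finset.set_biUnion_insert]
    constructor
    · rw [hU]; exact A.union_mem _ (hf a (Finset.mem_cons_self a F)) _ hmem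
    · rw [hU, P.add _ (hf a (Finset.mem_cons_self a F)) _ hmem hdisj, hsum,
        Finset.sum_cons]

/-- Canonical representative of a length-`t` cylinder. -/
def extSeq (t : ℕ) (s : Fin t → Bool) : BinSeq :=
  fun i => if h : i < t then s ⟨i, h⟩ else false

/-- The cylinder indexed by a finite word. -/
def Cyl (t : ℕ) (s : Fin t → Bool) : Set BinSeq := cyl (extSeq t s) t

lemma mem_Cyl {t : ℕ} {s : Fin t → Bool} {ω : BinSeq} :
    ω ∈ Cyl t s ↔ ∀ i : Fin t, ω i = s i := by
  constructor
  · intro h i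
    have := h i i.isLt
    simpa [extSeq, i.isLt] using this
  · intro h i hi
    have := h ⟨i, hi⟩
    simpa [extSeq, hi] using this

lemma mem_Cyl_self (t : ℕ) (ω : BinSeq) : ω ∈ Cyl t (fun i => ω i) :=
  mem_Cyl.2 fun _ => rfl

lemma Cyl_disjoint {t : ℕ} {s s' : Fin t → Bool} (h : s ≠ s') :
    Disjoint (Cyl t s) (Cyl t s') := by
  rw [Set.disjoint_left]
  intro ω hω hω'
  exact h (funext fun i => (mem_Cyl.1 hω i).symm.trans (mem_Cyl.1 hω' i))

lemma cyl_eq_Cyl {t : ℕ} {s : Fin t → Bool} {ω : BinSeq} (h : ω ∈ Cyl t s) :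
    cyl ω t = Cyl t s := by
  ext ω'
  constructor
  · intro h' i hi
    exact (h' i hi).trans (h i hi)
  · intro h' i hi
    exact (h' i hi).trans (h i hi).symm

end AuxLemmas

/-- Proposition 1: if `P(ωᵗ) > 0` for every cylinder and `P` merges with
`Q`, then `Q ≪ P`. -/
theorem merging_implies_absolute_continuity
    (A : SetAlgebra BinSeq) (hσ : A.IsSigmaAlgebra)
    (hcyl : ∀ (ω : BinSeq) (t : ℕ), cyl ω t ∈ A.sets)
    (P Q : FA A) (hpos : ∀ (ω : BinSeq) (t : ℕ), 0 < P.m (cyl ω t))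
    (hmerge : Merges P Q) : AbsCont P Q := by
  classical
  intro E hE hP
  rw [Metric.tendsto_atTop]
  intro ε hε
  set ε' := ε / 3 with hε'def
  have hε' : 0 < ε' := by positivity
  -- choose a time `T` where the merging set has small `Q`-measure
  obtain ⟨T, hT⟩ := Metric.tendsto_atTop.1 (hmerge ε' hε') ε' hε'
  have hBsmall : Q.m {ω | ∃ F ∈ A.sets,
      ε' < |P.cond F (cyl ω T) - Q.cond F (cyl ω T)|} < ε' := by
    have := hT T le_rfl
    rw [Real.dist_eq, sub_zero] at this
    exact lt_of_le_of_lt (le_abs_self _) this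
  -- the cylinders of length T
  set C : (Fin T → Bool) → Set BinSeq := Cyl T with hCdef
  have hCmem : ∀ s, C s ∈ A.sets := fun s => hcyl _ _
  -- minimal P-measure of a cylinder
  have hne : (Finset.univ : Finset (Fin T → Bool)).Nonempty := Finset.univ_nonempty
  set δ := Finset.univ.inf' hne (fun s => P.m (C s)) with hδdef
  have hδpos : 0 < δ := by
    rw [hδdef, Finset.lt_inf'_iff]
    intro s _
    exact hpos _ _
  have hδle : ∀ s, δ ≤ P.m (C s) := fun s => Finset.inf'_le _ (Finset.mem_univ s)
  -- the bad set is a finite union of cylinders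
  set bad : (Fin T → Bool) → Prop :=
    fun s => ∃ F ∈ A.sets, ε' < |P.cond F (C s) - Q.cond F (C s)| with hbaddef
  have hBeq : {ω | ∃ F ∈ A.sets,
      ε' < |P.cond F (cyl ω T) - Q.cond F (cyl ω T)|}
      = ⋃ s ∈ Finset.univ.filter bad, C s := by
    ext ω
    simp only [Set.mem_setOf_eq, Set.mem_iUnion, Finset.mem_filter, Finset.mem_univ,
      true_and, exists_prop]
    constructor
    · intro h
      refine ⟨fun i => ω i, ?_, mem_Cyl_self T ω⟩
      show ∃ F ∈ A.sets, ε' < |P.cond F (C fun i => ω i) - Q.cond F (C fun i => ω i)|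
      rwa [show C (fun i => ω i) = cyl ω T from (cyl_eq_Cyl (mem_Cyl_self T ω)).symm]
    · rintro ⟨s, hs, hmem⟩
      rwa [cyl_eq_Cyl hmem]
  -- key estimate
  have key : ∀ n, P.m (E n) < ε' * δ → Q.m (E n) < ε := by
    intro n hPn
    have hEn := hE n
    have hdisj : ((Finset.univ : Finset (Fin T → Bool)) : Set (Fin T → Bool)).PairwiseDisjoint
        (fun s => E n ∩ C s) := by
      intro s _ s' _ hss
      exact (Cyl_disjoint hss).mono Set.inter_subset_right Set.inter_subset_right
    have hmem : ∀ s ∈ (Finset.univ : Finset (Fin T → Bool)),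
        E n ∩ C s ∈ A.sets := fun s _ => aux_inter_mem hEn (hCmem s)
    obtain ⟨_, hsum⟩ := aux_m_sum Q Finset.univ (fun s => E n ∩ C s) hmem hdisj
    have hpart : (⋃ s ∈ (Finset.univ : Finset (Fin T → Bool)), E n ∩ C s) = E n := by
      apply Set.Subset.antisymm
      · intro ω hω
        simp only [Set.mem_iUnion] at hω
        obtain ⟨s, _, h, _⟩ := hω
        exact h
      · intro ω hω
        simp only [Set.mem_iUnion]
        exact ⟨fun i => ω i, Finset.mem_univ _, hω, mem_Cyl_self T ω⟩
    rw [hpart] at hsum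
    -- bound the good terms
    have hgood : ∀ s, ¬ bad s →
        Q.m (E n ∩ C s) ≤ (P.m (E n) / δ + ε') * Q.m (C s) := by
      intro s hb
      rcases lt_or_ge 0 (Q.m (C s)) with hQ | hQ
      · have hcond : |P.cond (E n) (C s) - Q.cond (E n) (C s)| ≤ ε' := by
          by_contra hc
          exact hb ⟨E n, hEn, lt_of_not_ge hc⟩
        have h1 : Q.cond (E n) (C s) ≤ P.cond (E n) (C s) + ε' := by
          have := abs_le.1 hcond
          linarith [this.1]
        have h2 : P.cond (E n) (C s) ≤ P.m (E n) / δ := by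
          unfold FA.cond
          apply div_le_div₀ (P.nonneg _ hEn)
            (aux_m_mono P (aux_inter_mem hEn (hCmem s)) hEn Set.inter_subset_left)
            hδpos (hδle s)
        have h3 : Q.m (E n ∩ C s) / Q.m (C s) ≤ P.m (E n) / δ + ε' := by
          have : Q.cond (E n) (C s) = Q.m (E n ∩ C s) / Q.m (C s) := rfl
          linarith [h1, h2, this ▸ h1]
        calc Q.m (E n ∩ C s) = Q.m (E n ∩ C s) / Q.m (C s) * Q.m (C s) := by
              field_simp
          _ ≤ (P.m (E n) / δ + ε') * Q.m (C s) :=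
              mul_le_mul_of_nonneg_right h3 (le_of_lt hQ)
      · have hQ0 : Q.m (C s) = 0 := le_antisymm hQ (Q.nonneg _ (hCmem s))
        have : Q.m (E n ∩ C s) ≤ Q.m (C s) :=
          aux_m_mono Q (aux_inter_mem hEn (hCmem s)) (hCmem s) Set.inter_subset_right
        rw [hQ0] at this
        rw [hQ0, mul_zero]
        exact this
    -- split the sum into bad and good parts
    have hsplit := Finset.sum_filter_add_sum_filter_not
      (Finset.univ : Finset (Fin T → Bool)) bad (fun s => Q.m (E n ∩ C s))
    -- the bad part is at most Q(B)
    have hbadsum : ∑ s ∈ Finset.univ.filter bad, Q.m (E n ∩ C s)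
        ≤ Q.m {ω | ∃ F ∈ A.sets,
          ε' < |P.cond F (cyl ω T) - Q.cond F (cyl ω T)|} := by
      obtain ⟨hm, hs⟩ := aux_m_sum Q (Finset.univ.filter bad) C
        (fun s _ => hCmem s)
        (fun s _ s' _ hss => Cyl_disjoint hss)
      rw [hBeq, hs]
      apply Finset.sum_le_sum
      intro s _
      exact aux_m_mono Q (aux_inter_mem hEn (hCmem s)) (hCmem s) Set.inter_subset_right
    -- the good part
    have hcoef : (0:ℝ) ≤ P.m (E n) / δ + ε' := by
      have := P.nonneg _ hEn
      positivity
    have hgoodsum : ∑ s ∈ Finset.univ.filter (fun s => ¬ bad s), Q.m (E n ∩ C s)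
        ≤ (P.m (E n) / δ + ε') * 1 := by
      calc ∑ s ∈ Finset.univ.filter (fun s => ¬ bad s), Q.m (E n ∩ C s)
          ≤ ∑ s ∈ Finset.univ.filter (fun s => ¬ bad s),
              (P.m (E n) / δ + ε') * Q.m (C s) := by
            apply Finset.sum_le_sum
            intro s hs
            exact hgood s (Finset.mem_filter.1 hs).2
        _ = (P.m (E n) / δ + ε')
              * ∑ s ∈ Finset.univ.filter (fun s => ¬ bad s), Q.m (C s) := by
            rw [Finset.mul_sum]
        _ ≤ (P.m (E n) / δ + ε') * 1 := by
            apply mul_le_mul_of_nonneg_left _ hcoef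
            obtain ⟨hm, hs⟩ := aux_m_sum Q (Finset.univ.filter (fun s => ¬ bad s)) C
              (fun s _ => hCmem s) (fun s _ s' _ hss => Cyl_disjoint hss)
            rw [← hs]
            have hsub : (⋃ s ∈ Finset.univ.filter (fun s => ¬ bad s), C s)
                ⊆ Set.univ := Set.subset_univ _
            have := aux_m_mono Q hm A.univ_mem hsub
            rwa [Q.total] at this
    -- combine
    have hPd : P.m (E n) / δ < ε' := (div_lt_iff₀ hδpos).2 (by linarith [hPn])
    have : Q.m (E n) < ε' + (ε' + ε') := by
      rw [hsum, ← hsplit]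
      have := hbadsum
      have := hgoodsum
      nlinarith [hBsmall, hbadsum, hgoodsum, hPd]
    linarith [this]
  -- finish: P.m (E n) → 0 gives eventually P.m (E n) < ε' * δ
  obtain ⟨N, hN⟩ := Metric.tendsto_atTop.1 hP (ε' * δ) (by positivity)
  refine ⟨N, fun n hn => ?_⟩
  have hPn : P.m (E n) < ε' * δ := by
    have := hN n hn
    rw [Real.dist_eq, sub_zero] at this
    exact lt_of_le_of_lt (le_abs_self _) this
  rw [Real.dist_eq, sub_zero, abs_of_nonneg (Q.nonneg _ (hE n))]
  exact key n hPn
end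

section
/- Let P be a finitely additive probability on ({0,1}^∞, Σ) that is an extreme point of the set E(P_F, F, Σ) of finitely additive extensions to Σ of its restriction P_F to the algebra F generated by cylinders. Then P satisfies the Blackwell–Dubins property: for every finitely additive probability Q with Q ≪ P, P merges with Q. -/
open Filter Topology


namespace BD

open Filter Topology Set

variable {Ω : Type*} {A : SetAlgebra Ω}

lemma empty_mem (A : SetAlgebra Ω) : (∅ : Set Ω) ∈ A.sets := by
  have := A.compl_mem _ A.univ_mem
  simpa using this

lemma inter_mem {S T : Set Ω} (hS : S ∈ A.sets) (hT : T ∈ A.sets) : S ∩ T ∈ A.sets := by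
  have := A.compl_mem _ (A.union_mem _ (A.compl_mem _ hS) _ (A.compl_mem _ hT))
  simpa [Set.compl_union] using this

lemma diff_mem {S T : Set Ω} (hS : S ∈ A.sets) (hT : T ∈ A.sets) : S \ T ∈ A.sets := by
  rw [Set.diff_eq]; exact inter_mem hS (A.compl_mem _ hT)

variable (P : FA A)

lemma m_empty : P.m ∅ = 0 := by
  have := P.add ∅ (empty_mem A) ∅ (empty_mem A) (disjoint_bot_left)
  simp at this; linarith

lemma m_diff {S T : Set Ω} (hS : S ∈ A.sets) (hT : T ∈ A.sets) (h : T ⊆ S) :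
    P.m (S \ T) = P.m S - P.m T := by
  have hd : Disjoint T (S \ T) := Set.disjoint_sdiff_right.mono_left le_rfl
  have := P.add T hT (S \ T) (diff_mem hS hT) hd
  rw [Set.union_diff_cancel h] at this; linarith

lemma m_mono {S T : Set Ω} (hS : S ∈ A.sets) (hT : T ∈ A.sets) (h : S ⊆ T) :
    P.m S ≤ P.m T := by
  have := m_diff P hT hS h
  have h2 := P.nonneg _ (diff_mem hT hS)
  linarith

lemma m_le_one {S : Set Ω} (hS : S ∈ A.sets) : P.m S ≤ 1 := by
  have := m_mono P hS A.univ_mem (Set.subset_univ S)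
  rw [P.total] at this; exact this

lemma m_union_inter {S T : Set Ω} (hS : S ∈ A.sets) (hT : T ∈ A.sets) :
    P.m (S ∪ T) = P.m S + P.m T - P.m (S ∩ T) := by
  have h1 : S ∪ T = S ∪ (T \ S) := (Set.union_diff_self).symm
  have h2 : T = (T ∩ S) ∪ (T \ S) := by
    ext x; simp only [Set.mem_union, Set.mem_inter_iff, Set.mem_diff]; tauto
  have h3 := P.add S hS (T \ S) (diff_mem hT hS) Set.disjoint_sdiff_right
  have h4 := P.add (T ∩ S) (inter_mem hT hS) (T \ S) (diff_mem hT hS)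
    (by rw [Set.disjoint_iff_inter_eq_empty]; ext x;
        simp only [Set.mem_inter_iff, Set.mem_diff, Set.mem_empty_iff_false, iff_false]; tauto)
  rw [← h2] at h4
  rw [h1, h3]
  have h5 : S ∩ T = T ∩ S := Set.inter_comm S T
  rw [h5]; linarith

lemma biUnion_mem {ι : Type*} (s : Finset ι) (f : ι → Set Ω) (hf : ∀ i ∈ s, f i ∈ A.sets) :
    (⋃ i ∈ s, f i) ∈ A.sets := by
  classical
  induction s using Finset.induction_on with
  | empty => simpa using empty_mem A
  | @insert a s' hxa ih =>
    rw [Finset.set_biUnion_insert]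
    exact A.union_mem _ (hf a (Finset.mem_insert_self a s')) _
      (ih fun i hi => hf i (Finset.mem_insert_of_mem hi))

lemma m_biUnion {ι : Type*} (s : Finset ι) (f : ι → Set Ω) (hf : ∀ i ∈ s, f i ∈ A.sets)
    (hd : ∀ i ∈ s, ∀ j ∈ s, i ≠ j → Disjoint (f i) (f j)) :
    P.m (⋃ i ∈ s, f i) = ∑ i ∈ s, P.m (f i) := by
  classical
  induction s using Finset.induction_on with
  | empty => simpa using m_empty P
  | @insert a s' hxa ih =>
    rw [Finset.set_biUnion_insert, Finset.sum_insert hxa]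
    have hrest : (⋃ i ∈ s', f i) ∈ A.sets :=
      biUnion_mem s' f (fun i hi => hf i (Finset.mem_insert_of_mem hi))
    have hdisj : Disjoint (f a) (⋃ i ∈ s', f i) := by
      rw [Set.disjoint_iff_inter_eq_empty]
      ext x; simp only [Set.mem_inter_iff, Set.mem_iUnion, Set.mem_empty_iff_false, iff_false]
      rintro ⟨hxa', i, hi, hxi⟩
      have hne : a ≠ i := by rintro rfl; exact hxa hi
      exact (Set.disjoint_iff_inter_eq_empty.1
        (hd a (Finset.mem_insert_self a s') i (Finset.mem_insert_of_mem hi) hne)).subset ⟨hxa', hxi⟩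
    rw [P.add _ (hf a (Finset.mem_insert_self a s')) _ hrest hdisj,
      ih (fun i hi => hf i (Finset.mem_insert_of_mem hi))
        (fun i hi j hj hij => hd i (Finset.mem_insert_of_mem hi) j (Finset.mem_insert_of_mem hj) hij)]


open Filter Topology Set

/-- Level-`t` cylinder indexed by a boolean tuple. -/
def Cx (t : ℕ) (v : Fin t → Bool) : Set BinSeq := {ω | ∀ i : Fin t, ω i = v i}

/-- First `t` coordinates of a path. -/
def proj (t : ℕ) (ω : BinSeq) : Fin t → Bool := fun i => ω i

/-- Restriction of a tuple to a shorter length. -/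
def res {s t : ℕ} (h : s ≤ t) (v : Fin t → Bool) : Fin s → Bool :=
  fun i => v (Fin.castLE h i)

lemma cyl_eq_Cx (ω : BinSeq) (t : ℕ) : cyl ω t = Cx t (proj t ω) := by
  ext ω'; constructor
  · intro h i; exact h i i.2
  · intro h i hi; exact h ⟨i, hi⟩

lemma Cx_eq_cyl (t : ℕ) (v : Fin t → Bool) :
    Cx t v = cyl (fun j => if h : j < t then v ⟨j, h⟩ else false) t := by
  ext ω'; constructor
  · intro h i hi; simpa [dif_pos hi] using h ⟨i, hi⟩
  · intro h i; simpa [dif_pos i.2] using h i i.2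

lemma mem_Cx_proj (t : ℕ) (ω : BinSeq) : ω ∈ Cx t (proj t ω) := fun _ => rfl

lemma proj_eq_of_mem {t : ℕ} {v : Fin t → Bool} {ω : BinSeq} (h : ω ∈ Cx t v) :
    proj t ω = v := funext fun i => h i

lemma Cx_disjoint {t : ℕ} {v v' : Fin t → Bool} (h : v ≠ v') : Disjoint (Cx t v) (Cx t v') := by
  rw [Set.disjoint_iff_inter_eq_empty]
  ext ω; simp only [Set.mem_inter_iff, Set.mem_empty_iff_false, iff_false]
  rintro ⟨h1, h2⟩
  exact h ((proj_eq_of_mem h1).symm.trans (proj_eq_of_mem h2))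

lemma Cx_subset_res {s t : ℕ} (h : s ≤ t) (v : Fin t → Bool) : Cx t v ⊆ Cx s (res h v) := by
  intro ω hω i
  exact hω (Fin.castLE h i)

lemma univ_eq_biUnion_Cx (t : ℕ) : (Set.univ : Set BinSeq) = ⋃ v, Cx t v := by
  ext ω; simp only [Set.mem_univ, true_iff, Set.mem_iUnion]
  exact ⟨proj t ω, mem_Cx_proj t ω⟩

variable {A : SetAlgebra BinSeq}

section

variable (hcyl : ∀ (ω : BinSeq) (t : ℕ), cyl ω t ∈ A.sets)
include hcyl

lemma Cx_mem (t : ℕ) (v : Fin t → Bool) : Cx t v ∈ A.sets := by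
  rw [Cx_eq_cyl]; exact hcyl _ t

variable (P : FA A)

/-- partition additivity at level t -/
lemma m_levelsum {E : Set BinSeq} (hE : E ∈ A.sets) (t : ℕ) :
    P.m E = ∑ v : Fin t → Bool, P.m (E ∩ Cx t v) := by
  classical
  have h1 : E = ⋃ v ∈ (Finset.univ : Finset (Fin t → Bool)), E ∩ Cx t v := by
    ext ω; simp only [Set.mem_iUnion, Finset.mem_univ, Set.mem_inter_iff, exists_prop, true_and]
    constructor
    · intro h; exact ⟨proj t ω, h, mem_Cx_proj t ω⟩
    · rintro ⟨v, h, _⟩; exact h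
  calc P.m E = P.m (⋃ v ∈ (Finset.univ : Finset (Fin t → Bool)), E ∩ Cx t v) := by rw [← h1]
    _ = ∑ v : Fin t → Bool, P.m (E ∩ Cx t v) := by
        apply m_biUnion
        · exact fun v _ => inter_mem hE (Cx_mem hcyl t v)
        · intro i _ j _ hij
          exact ((Cx_disjoint hij).mono (Set.inter_subset_right) (Set.inter_subset_right))

omit hcyl in
lemma Cx_inter_Cx {s t : ℕ} (hst : s ≤ t) (w : Fin s → Bool) (v : Fin t → Bool) :
    Cx s w ∩ Cx t v = if res hst v = w then Cx t v else ∅ := by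
  split_ifs with h
  · subst h
    exact Set.inter_eq_self_of_subset_right (Cx_subset_res hst v)
  · rw [Set.eq_empty_iff_forall_notMem]
    rintro ω ⟨h1, h2⟩
    exact h (by rw [← proj_eq_of_mem h2, ← proj_eq_of_mem h1]; rfl)

/-- refinement formula -/
lemma m_refine {E : Set BinSeq} (hE : E ∈ A.sets) {s t : ℕ} (hst : s ≤ t) (w : Fin s → Bool) :
    P.m (E ∩ Cx s w) = ∑ v ∈ Finset.univ.filter (fun v : Fin t → Bool => res hst v = w),
      P.m (E ∩ Cx t v) := by
  classical
  rw [m_levelsum hcyl P (inter_mem hE (Cx_mem hcyl s w)) t, Finset.sum_filter]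
  apply Finset.sum_congr rfl
  intro v _
  rw [Set.inter_assoc, Cx_inter_Cx hst]
  split_ifs with h
  · rfl
  · simp [m_empty]

end


open Filter Topology Set

open Classical in
/-- Generalized (ultrafilter) limit of a sequence of reals. -/
noncomputable def ulim (a : ℕ → ℝ) : ℝ :=
  if h : ∃ x, Tendsto a (Filter.hyperfilter ℕ : Filter ℕ) (𝓝 x) then h.choose else 0

lemma ulim_spec {a : ℕ → ℝ} (h : ∃ x, Tendsto a (Filter.hyperfilter ℕ : Filter ℕ) (𝓝 x)) :
    Tendsto a (Filter.hyperfilter ℕ : Filter ℕ) (𝓝 (ulim a)) := by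
  classical
  rw [ulim, dif_pos h]; exact h.choose_spec

lemma exists_ulim {a : ℕ → ℝ} {c : ℝ} (h : ∀ n, |a n| ≤ c) :
    ∃ x, Tendsto a (Filter.hyperfilter ℕ : Filter ℕ) (𝓝 x) := by
  have hmem : Set.Icc (-c) c ∈ Ultrafilter.map a (Filter.hyperfilter ℕ) := by
    rw [Ultrafilter.mem_map]
    have : a ⁻¹' (Set.Icc (-c) c) = Set.univ := by
      ext n; simp only [Set.mem_preimage, Set.mem_Icc, Set.mem_univ, iff_true]
      exact abs_le.1 (h n)
    rw [this]; exact Filter.univ_mem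
  obtain ⟨x, _, hx⟩ := isCompact_Icc.ultrafilter_le_nhds (Ultrafilter.map a (Filter.hyperfilter ℕ)) (by rwa [Filter.le_principal_iff])
  exact ⟨x, hx⟩

lemma ulim_unique {a : ℕ → ℝ} {x : ℝ}
    (h : Tendsto a (Filter.hyperfilter ℕ : Filter ℕ) (𝓝 x)) : ulim a = x :=
  tendsto_nhds_unique (ulim_spec ⟨x, h⟩) h

lemma ulim_eventually_zero {a : ℕ → ℝ} {s : ℕ} (h : ∀ t, s ≤ t → a t = 0) : ulim a = 0 := by
  apply ulim_unique
  have : ∀ᶠ t in (Filter.hyperfilter ℕ : Filter ℕ), a t = (fun _ => (0:ℝ)) t := by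
    apply Nat.hyperfilter_le_atTop
    filter_upwards [Filter.eventually_ge_atTop s] with t ht using h t ht
  exact Tendsto.congr' (this.mono fun t ht => ht.symm) tendsto_const_nhds

lemma le_ulim {a : ℕ → ℝ} {c x : ℝ} (h : ∀ n, c ≤ a n)
    (hx : Tendsto a (Filter.hyperfilter ℕ : Filter ℕ) (𝓝 x)) : c ≤ x :=
  ge_of_tendsto hx (Filter.Eventually.of_forall h)


open Filter Topology Set

variable {A : SetAlgebra BinSeq}

/-- The conditional-expectation-difference charge used in the density argument. -/
noncomputable def bfun (P : FA A) (E : Set BinSeq) (t : ℕ) (S : Set BinSeq) : ℝ :=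
  P.m (S ∩ E) - ∑ w : Fin t → Bool, (P.m (E ∩ Cx t w) / P.m (Cx t w)) * P.m (S ∩ Cx t w)

section StepC

variable (hcyl : ∀ (ω : BinSeq) (t : ℕ), cyl ω t ∈ A.sets)
variable (P : FA A) {E : Set BinSeq} (hE : E ∈ A.sets)
include hcyl hE

lemma r_nonneg (t : ℕ) (w : Fin t → Bool) : 0 ≤ P.m (E ∩ Cx t w) / P.m (Cx t w) :=
  div_nonneg (P.nonneg _ (inter_mem hE (Cx_mem hcyl t w))) (P.nonneg _ (Cx_mem hcyl t w))

lemma r_le_one (t : ℕ) (w : Fin t → Bool) : P.m (E ∩ Cx t w) / P.m (Cx t w) ≤ 1 := by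
  rcases eq_or_lt_of_le (P.nonneg _ (Cx_mem hcyl t w)) with h | h
  · rw [← h]; simp
  · rw [div_le_one h]
    exact m_mono P (inter_mem hE (Cx_mem hcyl t w)) (Cx_mem hcyl t w) Set.inter_subset_right

lemma r_mul (t : ℕ) (w : Fin t → Bool) :
    P.m (E ∩ Cx t w) / P.m (Cx t w) * P.m (Cx t w) = P.m (E ∩ Cx t w) := by
  rcases eq_or_lt_of_le (P.nonneg _ (Cx_mem hcyl t w)) with h | h
  · rw [← h, mul_zero]
    have h0 : P.m (E ∩ Cx t w) ≤ 0 := by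
      rw [h]; exact m_mono P (inter_mem hE (Cx_mem hcyl t w)) (Cx_mem hcyl t w) Set.inter_subset_right
    have h1 : 0 ≤ P.m (E ∩ Cx t w) := P.nonneg _ (inter_mem hE (Cx_mem hcyl t w))
    linarith
  · field_simp

lemma bfun_bound (t : ℕ) {S : Set BinSeq} (hS : S ∈ A.sets) : |bfun P E t S| ≤ P.m S := by
  have hdec : P.m (S ∩ E) = ∑ w : Fin t → Bool, P.m (S ∩ E ∩ Cx t w) :=
    m_levelsum hcyl P (inter_mem hS hE) t
  have hdecS : P.m S = ∑ w : Fin t → Bool, P.m (S ∩ Cx t w) := m_levelsum hcyl P hS t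
  rw [bfun, hdec, ← Finset.sum_sub_distrib, abs_le]
  constructor
  · rw [hdecS]
    have : ∀ w : Fin t → Bool, -(P.m (S ∩ Cx t w)) ≤
        P.m (S ∩ E ∩ Cx t w) - P.m (E ∩ Cx t w) / P.m (Cx t w) * P.m (S ∩ Cx t w) := by
      intro w
      have h1 : 0 ≤ P.m (S ∩ E ∩ Cx t w) :=
        P.nonneg _ (inter_mem (inter_mem hS hE) (Cx_mem hcyl t w))
      have h2 : P.m (E ∩ Cx t w) / P.m (Cx t w) * P.m (S ∩ Cx t w) ≤ P.m (S ∩ Cx t w) := by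
        have := r_le_one hcyl P hE t w
        have h3 : 0 ≤ P.m (S ∩ Cx t w) := P.nonneg _ (inter_mem hS (Cx_mem hcyl t w))
        nlinarith
      linarith
    rw [← Finset.sum_neg_distrib]
    exact Finset.sum_le_sum fun w _ => this w
  · rw [hdecS]
    apply Finset.sum_le_sum
    intro w _
    have h1 : P.m (S ∩ E ∩ Cx t w) ≤ P.m (S ∩ Cx t w) := by
      apply m_mono P (inter_mem (inter_mem hS hE) (Cx_mem hcyl t w)) (inter_mem hS (Cx_mem hcyl t w))
      exact Set.inter_subset_inter_left _ Set.inter_subset_left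
    have h2 : 0 ≤ P.m (E ∩ Cx t w) / P.m (Cx t w) * P.m (S ∩ Cx t w) :=
      mul_nonneg (r_nonneg hcyl P hE t w) (P.nonneg _ (inter_mem hS (Cx_mem hcyl t w)))
    linarith

lemma bfun_add (t : ℕ) {S T : Set BinSeq} (hS : S ∈ A.sets) (hT : T ∈ A.sets)
    (hd : Disjoint S T) : bfun P E t (S ∪ T) = bfun P E t S + bfun P E t T := by
  have h1 : P.m ((S ∪ T) ∩ E) = P.m (S ∩ E) + P.m (T ∩ E) := by
    rw [Set.union_inter_distrib_right]
    exact P.add _ (inter_mem hS hE) _ (inter_mem hT hE)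
      (hd.mono Set.inter_subset_left Set.inter_subset_left)
  have h2 : ∀ w : Fin t → Bool, P.m ((S ∪ T) ∩ Cx t w) = P.m (S ∩ Cx t w) + P.m (T ∩ Cx t w) := by
    intro w
    rw [Set.union_inter_distrib_right]
    exact P.add _ (inter_mem hS (Cx_mem hcyl t w)) _ (inter_mem hT (Cx_mem hcyl t w))
      (hd.mono Set.inter_subset_left Set.inter_subset_left)
  simp only [bfun, h1]
  have h3 : ∑ w : Fin t → Bool, P.m (E ∩ Cx t w) / P.m (Cx t w) * P.m ((S ∪ T) ∩ Cx t w)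
      = ∑ w : Fin t → Bool, P.m (E ∩ Cx t w) / P.m (Cx t w) * P.m (S ∩ Cx t w)
      + ∑ w : Fin t → Bool, P.m (E ∩ Cx t w) / P.m (Cx t w) * P.m (T ∩ Cx t w) := by
    rw [← Finset.sum_add_distrib]
    apply Finset.sum_congr rfl
    intro w _
    rw [h2 w, mul_add]
  rw [h3]; ring

/-- On sets which are unions of level-`t` cylinders, `bfun` vanishes. -/
lemma bfun_cylset (t : ℕ) {S : Set BinSeq} (hrep : ∀ ω ∈ S, Cx t (proj t ω) ⊆ S) :
    bfun P E t S = 0 := by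
  classical
  set W : Finset (Fin t → Bool) := Finset.univ.filter (fun v => Cx t v ⊆ S) with hW
  have hSW : S = ⋃ v ∈ W, Cx t v := by
    ext ω; constructor
    · intro hω
      refine Set.mem_biUnion (show proj t ω ∈ W from ?_) (mem_Cx_proj t ω)
      rw [hW]
      exact Finset.mem_filter.mpr ⟨Finset.mem_univ _, hrep ω hω⟩
    · intro hω
      obtain ⟨v, hv, hωv⟩ := Set.mem_iUnion₂.1 hω
      rw [hW] at hv; simp only [Finset.mem_filter, Finset.mem_univ, true_and] at hv
      exact hv hωv
  have hSint : ∀ w : Fin t → Bool, S ∩ Cx t w = if w ∈ W then Cx t w else ∅ := by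
    intro w
    split_ifs with h
    · rw [hW] at h; simp only [Finset.mem_filter, Finset.mem_univ, true_and] at h
      exact Set.inter_eq_self_of_subset_right h
    · rw [Set.eq_empty_iff_forall_notMem]
      rintro ω ⟨h1, h2⟩
      apply h
      rw [hW]; simp only [Finset.mem_filter, Finset.mem_univ, true_and]
      rw [← proj_eq_of_mem h2]
      exact hrep ω h1
  have h1 : P.m (S ∩ E) = ∑ v ∈ W, P.m (E ∩ Cx t v) := by
    have : S ∩ E = ⋃ v ∈ W, (E ∩ Cx t v) := by
      rw [hSW]; ext ω
      simp only [Set.mem_inter_iff, Set.mem_iUnion, exists_prop]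
      constructor
      · rintro ⟨⟨v, hv, hωv⟩, hωE⟩; exact ⟨v, hv, hωE, hωv⟩
      · rintro ⟨v, hv, hωE, hωv⟩; exact ⟨⟨v, hv, hωv⟩, hωE⟩
    rw [this]
    apply m_biUnion
    · exact fun v _ => inter_mem hE (Cx_mem hcyl t v)
    · intro i _ j _ hij
      exact (Cx_disjoint hij).mono Set.inter_subset_right Set.inter_subset_right
  have h2 : ∑ w : Fin t → Bool, P.m (E ∩ Cx t w) / P.m (Cx t w) * P.m (S ∩ Cx t w)
      = ∑ v ∈ W, P.m (E ∩ Cx t v) := by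
    rw [← Finset.sum_filter_add_sum_filter_not Finset.univ (fun w => w ∈ W)]
    have hWeq : Finset.univ.filter (fun w => w ∈ W) = W := by
      ext w; simp
    have hA : ∑ w ∈ Finset.univ.filter (fun w => w ∈ W),
        P.m (E ∩ Cx t w) / P.m (Cx t w) * P.m (S ∩ Cx t w) = ∑ v ∈ W, P.m (E ∩ Cx t v) := by
      rw [hWeq]
      apply Finset.sum_congr rfl
      intro w hw
      rw [hSint w, if_pos hw, r_mul hcyl P hE]
    have hB : ∑ w ∈ Finset.univ.filter (fun w => ¬ w ∈ W),
        P.m (E ∩ Cx t w) / P.m (Cx t w) * P.m (S ∩ Cx t w) = 0 := by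
      apply Finset.sum_eq_zero
      intro w hw
      simp only [Finset.mem_filter, Finset.mem_univ, true_and] at hw
      rw [hSint w, if_neg hw, m_empty, mul_zero]
    rw [hA, hB, add_zero]
  rw [bfun, h1, h2, sub_self]

end StepC


open Filter Topology Set

variable {A : SetAlgebra BinSeq}

lemma InCylAlg_level {S : Set BinSeq} (h : InCylAlg S) :
    ∃ s : ℕ, ∀ t, s ≤ t → ∀ ω ∈ S, Cx t (proj t ω) ⊆ S := by
  obtain ⟨n, f, rfl⟩ := h
  refine ⟨Finset.univ.sup (fun i => (f i).2), fun t ht ω hω => ?_⟩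
  obtain ⟨i, hi⟩ := Set.mem_iUnion.1 hω
  have hle : (f i).2 ≤ t := le_trans (Finset.le_sup (f := fun i => (f i).2) (Finset.mem_univ i)) ht
  refine Set.Subset.trans ?_ (Set.subset_iUnion _ i)
  intro ω' hω' j hj
  have : ω' j = ω j := hω' ⟨j, lt_of_lt_of_le hj hle⟩
  rw [this]
  exact hi j hj

lemma biUnion_inter_Cx {t : ℕ} (W : Finset (Fin t → Bool)) (w : Fin t → Bool) :
    (⋃ v ∈ W, Cx t v) ∩ Cx t w = if w ∈ W then Cx t w else ∅ := by
  split_ifs with h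
  · refine Set.Subset.antisymm Set.inter_subset_right ?_
    intro ω hω
    exact ⟨Set.mem_biUnion h hω, hω⟩
  · rw [Set.eq_empty_iff_forall_notMem]
    rintro ω ⟨h1, h2⟩
    obtain ⟨v, hv, hωv⟩ := Set.mem_iUnion₂.1 h1
    have hvw : v = w := (proj_eq_of_mem hωv).symm.trans (proj_eq_of_mem h2)
    rw [hvw] at hv
    exact h hv

section StepCmain

variable (hcyl : ∀ (ω : BinSeq) (t : ℕ), cyl ω t ∈ A.sets)
variable (P : FA A)
include hcyl

theorem density (hext : ExtremePoint P) {E : Set BinSeq} (hE : E ∈ A.sets)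
    {η : ℝ} (hη : 0 < η) :
    ∃ (t : ℕ) (W : Finset (Fin t → Bool)),
      P.m ((E \ (⋃ v ∈ W, Cx t v)) ∪ ((⋃ v ∈ W, Cx t v) \ E)) < η := by
  classical
  by_contra hcon
  push_neg at hcon
  -- Step 1: the conditional-variance sequence stays at least η/2.
  have hbE : ∀ t, η / 2 ≤ bfun P E t E := by
    intro t
    set W : Finset (Fin t → Bool) :=
      Finset.univ.filter (fun w => 1/2 < P.m (E ∩ Cx t w) / P.m (Cx t w)) with hWdef
    set F : Set BinSeq := ⋃ v ∈ W, Cx t v with hFdef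
    have hF : F ∈ A.sets := biUnion_mem W _ (fun v _ => Cx_mem hcyl t v)
    have hconW := hcon t W
    have hEF : (E \ F ∪ F \ E) ∈ A.sets :=
      A.union_mem _ (diff_mem hE hF) _ (diff_mem hF hE)
    have hsum : P.m (E \ F ∪ F \ E) = ∑ w : Fin t → Bool, P.m ((E \ F ∪ F \ E) ∩ Cx t w) :=
      m_levelsum hcyl P hEF t
    have hterm : ∀ w : Fin t → Bool,
        P.m ((E \ F ∪ F \ E) ∩ Cx t w) ≤
          2 * ((1 - P.m (E ∩ Cx t w) / P.m (Cx t w)) * P.m (E ∩ Cx t w)) := by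
      intro w
      have hCw := Cx_mem hcyl t w
      have hECw := inter_mem hE hCw
      have hFC := biUnion_inter_Cx W w
      have hp0 : 0 ≤ P.m (Cx t w) := P.nonneg _ hCw
      have hq0 : 0 ≤ P.m (E ∩ Cx t w) := P.nonneg _ hECw
      have hqp : P.m (E ∩ Cx t w) ≤ P.m (Cx t w) :=
        m_mono P hECw hCw Set.inter_subset_right
      have hr0 : 0 ≤ P.m (E ∩ Cx t w) / P.m (Cx t w) := r_nonneg hcyl P hE t w
      have hr1 : P.m (E ∩ Cx t w) / P.m (Cx t w) ≤ 1 := r_le_one hcyl P hE t w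
      have hrq : P.m (E ∩ Cx t w) / P.m (Cx t w) * P.m (Cx t w) = P.m (E ∩ Cx t w) :=
        r_mul hcyl P hE t w
      have hinter : (E \ F ∪ F \ E) ∩ Cx t w
          = ((E ∩ Cx t w) \ (F ∩ Cx t w)) ∪ ((F ∩ Cx t w) \ (E ∩ Cx t w)) := by
        ext ω
        simp only [Set.mem_inter_iff, Set.mem_union, Set.mem_diff]
        tauto
      by_cases hw : w ∈ W
      · have h12 : 1/2 < P.m (E ∩ Cx t w) / P.m (Cx t w) := by
          rw [hWdef] at hw
          simpa using (Finset.mem_filter.1 hw).2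
        rw [hinter, hFC, if_pos hw]
        have : (E ∩ Cx t w) \ Cx t w = ∅ := Set.diff_eq_empty.2 Set.inter_subset_right
        rw [this, Set.empty_union]
        have hdiff : P.m (Cx t w \ (E ∩ Cx t w)) = P.m (Cx t w) - P.m (E ∩ Cx t w) :=
          m_diff P hCw hECw Set.inter_subset_right
        rw [hdiff]
        nlinarith [hrq]
      · have h12 : P.m (E ∩ Cx t w) / P.m (Cx t w) ≤ 1/2 := by
          rw [hWdef] at hw
          simp only [Finset.mem_filter, Finset.mem_univ, true_and, not_lt] at hw
          exact hw
        rw [hinter, hFC, if_neg hw]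
        have h1 : (E ∩ Cx t w) \ (∅ : Set BinSeq) = E ∩ Cx t w := Set.diff_empty
        have h2 : (∅ : Set BinSeq) \ (E ∩ Cx t w) = ∅ := Set.empty_diff _
        rw [h1, h2, Set.union_empty]
        nlinarith
    have hbeq : bfun P E t E
        = ∑ w : Fin t → Bool, (1 - P.m (E ∩ Cx t w) / P.m (Cx t w)) * P.m (E ∩ Cx t w) := by
      rw [bfun, Set.inter_self, m_levelsum hcyl P hE t, ← Finset.sum_sub_distrib]
      apply Finset.sum_congr rfl
      intro w _; ring
    have : η ≤ ∑ w : Fin t → Bool, 2 * ((1 - P.m (E ∩ Cx t w) / P.m (Cx t w)) * P.m (E ∩ Cx t w)) :=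
      le_trans hconW (le_trans (le_of_eq hsum) (Finset.sum_le_sum fun w _ => hterm w))
    rw [← Finset.mul_sum] at this
    rw [hbeq]; linarith
  -- Step 2: build the perturbation charge λ and two extensions.
  set lam : Set BinSeq → ℝ := fun S => ulim (fun t => bfun P E t S) with hlam
  have hex : ∀ S ∈ A.sets, ∃ x,
      Tendsto (fun t => bfun P E t S) (Filter.hyperfilter ℕ : Filter ℕ) (𝓝 x) :=
    fun S hS => exists_ulim (fun t => bfun_bound hcyl P hE t hS)
  have hlam_lb : ∀ S ∈ A.sets, -P.m S ≤ lam S := by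
    intro S hS
    exact le_ulim (fun t => (abs_le.1 (bfun_bound hcyl P hE t hS)).1) (ulim_spec (hex S hS))
  have hlam_ub : ∀ S ∈ A.sets, lam S ≤ P.m S := by
    intro S hS
    have := ulim_spec (hex S hS)
    exact le_of_tendsto this
      (Filter.Eventually.of_forall fun t => (abs_le.1 (bfun_bound hcyl P hE t hS)).2)
  have hlam_add : ∀ S ∈ A.sets, ∀ T ∈ A.sets, Disjoint S T → lam (S ∪ T) = lam S + lam T := by
    intro S hS T hT hd
    apply ulim_unique
    have h1 := (ulim_spec (hex S hS)).add (ulim_spec (hex T hT))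
    exact h1.congr (fun t => (bfun_add hcyl P hE t hS hT hd).symm)
  have hlam_cyl : ∀ S, InCylAlg S → lam S = 0 := by
    intro S hS
    obtain ⟨s, hs⟩ := InCylAlg_level hS
    exact ulim_eventually_zero (s := s) (fun t ht => bfun_cylset hcyl P hE t (hs t ht))
  have hlam_univ : lam Set.univ = 0 :=
    ulim_eventually_zero (s := 0) (fun t _ => bfun_cylset hcyl P hE t
      (fun ω _ => Set.subset_univ _))
  have hlamE : η / 2 ≤ lam E := le_ulim hbE (ulim_spec (hex E hE))
  set Qe : FA A := {
    m := fun S => P.m S + lam S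
    nonneg := fun S hS => by have := hlam_lb S hS; linarith
    total := by rw [P.total, hlam_univ]; ring
    add := fun S hS T hT hd => by
      rw [P.add S hS T hT hd, hlam_add S hS T hT hd]; ring } with hQe
  set Re : FA A := {
    m := fun S => P.m S - lam S
    nonneg := fun S hS => by have := hlam_ub S hS; linarith
    total := by rw [P.total, hlam_univ]; ring
    add := fun S hS T hT hd => by
      rw [P.add S hS T hT hd, hlam_add S hS T hT hd]; ring } with hRe
  have hagQ : ExtAgree P Qe := by
    intro S hS
    rw [hQe]; simp only
    rw [hlam_cyl S hS]; ring
  have hagR : ExtAgree P Re := by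
    intro S hS
    rw [hRe]; simp only
    rw [hlam_cyl S hS]; ring
  have hconv : ∀ S ∈ A.sets, P.m S = (1/2 : ℝ) * Qe.m S + (1 - 1/2) * Re.m S := by
    intro S _
    rw [hQe, hRe]; simp only; ring
  have := hext Qe Re hagQ hagR (1/2) (by norm_num) (by norm_num) hconv E hE
  rw [hQe, hRe] at this; simp only at this
  linarith

end StepCmain


open Filter Topology Set

variable {A : SetAlgebra BinSeq}

lemma unif_ac (P Q : FA A) (h : AbsCont P Q) :
    ∀ ε > (0:ℝ), ∃ δ > (0:ℝ), ∀ S ∈ A.sets, P.m S < δ → Q.m S < ε := by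
  intro ε hε
  by_contra hcon
  push_neg at hcon
  have hch : ∀ n : ℕ, ∃ S, S ∈ A.sets ∧ P.m S < 1/(n+1) ∧ ε ≤ Q.m S := by
    intro n
    obtain ⟨S, hS, h1, h2⟩ := hcon (1/(n+1)) (by positivity)
    exact ⟨S, hS, h1, h2⟩
  choose S hSmem hSP hSQ using hch
  have hP0 : Tendsto (fun n => P.m (S n)) atTop (𝓝 0) := by
    have hub : Tendsto (fun n : ℕ => 1/((n:ℝ)+1)) atTop (𝓝 0) :=
      tendsto_one_div_add_atTop_nhds_zero_nat
    exact squeeze_zero (fun n => P.nonneg _ (hSmem n)) (fun n => le_of_lt (hSP n)) hub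
  have hQ0 := h S hSmem hP0
  have : ε ≤ 0 := ge_of_tendsto hQ0 (Filter.Eventually.of_forall hSQ)
  linarith

lemma ac_zero (P Q : FA A) (h : AbsCont P Q) {S : Set BinSeq} (hS : S ∈ A.sets)
    (hP : P.m S = 0) : Q.m S = 0 := by
  have h1 : Tendsto (fun _ : ℕ => P.m S) atTop (𝓝 0) := by
    rw [hP]; exact tendsto_const_nhds
  have h2 := h (fun _ => S) (fun _ => hS) h1
  exact tendsto_nhds_unique tendsto_const_nhds h2


open Filter Topology Set
open scoped Classical

variable {A : SetAlgebra BinSeq}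

/-- Measure with piecewise-constant density `c` on level-`s` cylinders w.r.t. `P`. -/
noncomputable def nu (P : FA A) (s : ℕ) (c : (Fin s → Bool) → ℝ) (E : Set BinSeq) : ℝ :=
  ∑ w : Fin s → Bool, c w * P.m (E ∩ Cx s w)

lemma m_union_le (P : FA A) {S T : Set BinSeq} (hS : S ∈ A.sets) (hT : T ∈ A.sets) :
    P.m (S ∪ T) ≤ P.m S + P.m T := by
  have h1 : S ∪ T = S ∪ (T \ S) := by rw [Set.union_diff_self]
  rw [h1, P.add S hS (T \ S) (diff_mem hT hS) Set.disjoint_sdiff_right]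
  have := m_mono P (diff_mem hT hS) hT (Set.diff_subset)
  linarith

section NU

variable (hcyl : ∀ (ω : BinSeq) (t : ℕ), cyl ω t ∈ A.sets)
variable (P : FA A)
include hcyl

lemma nu_nonneg {s : ℕ} {c : (Fin s → Bool) → ℝ} (hc : ∀ w, 0 ≤ c w)
    {E : Set BinSeq} (hE : E ∈ A.sets) : 0 ≤ nu P s c E :=
  Finset.sum_nonneg fun w _ => mul_nonneg (hc w)
    (P.nonneg _ (inter_mem hE (Cx_mem hcyl s w)))

lemma nu_add {s : ℕ} (c : (Fin s → Bool) → ℝ) {S T : Set BinSeq}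
    (hS : S ∈ A.sets) (hT : T ∈ A.sets) (hd : Disjoint S T) :
    nu P s c (S ∪ T) = nu P s c S + nu P s c T := by
  rw [nu, nu, nu, ← Finset.sum_add_distrib]
  apply Finset.sum_congr rfl
  intro w _
  rw [Set.union_inter_distrib_right,
    P.add _ (inter_mem hS (Cx_mem hcyl s w)) _ (inter_mem hT (Cx_mem hcyl s w))
      (hd.mono Set.inter_subset_left Set.inter_subset_left)]
  ring

lemma nu_refine {s t : ℕ} (hst : s ≤ t) (c : (Fin s → Bool) → ℝ)
    {E : Set BinSeq} (hE : E ∈ A.sets) :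
    nu P s c E = nu P t (fun v => c (res hst v)) E := by
  classical
  rw [nu, nu]
  have h1 : ∀ w : Fin s → Bool, c w * P.m (E ∩ Cx s w)
      = ∑ v ∈ Finset.univ.filter (fun v : Fin t → Bool => res hst v = w),
          c (res hst v) * P.m (E ∩ Cx t v) := by
    intro w
    rw [m_refine hcyl P hE hst w, Finset.mul_sum]
    apply Finset.sum_congr rfl
    intro v hv
    rw [(Finset.mem_filter.1 hv).2]
  rw [Finset.sum_congr rfl (fun w _ => h1 w)]
  exact Finset.sum_fiberwise _ _ _

omit hcyl in
/-- A finite union of level-`t₁` cylinders is closed under level-`t` cylinders, `t ≥ t₁`. -/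
lemma cylset_rep {t₁ t : ℕ} (ht : t₁ ≤ t) (W : Finset (Fin t₁ → Bool)) :
    ∀ ω ∈ ⋃ v ∈ W, Cx t₁ v, Cx t (proj t ω) ⊆ ⋃ v ∈ W, Cx t₁ v := by
  intro ω hω
  obtain ⟨v, hv, hωv⟩ := Set.mem_iUnion₂.1 hω
  refine Set.Subset.trans ?_ (Set.subset_iUnion₂ v hv)
  intro ω' hω' i
  have : ω' i = ω i := hω' ⟨i, lt_of_lt_of_le i.2 ht⟩
  rw [this]
  exact hωv i

lemma m_inter_cylset {t : ℕ} {F : Set BinSeq}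
    (hrep : ∀ ω ∈ F, Cx t (proj t ω) ⊆ F) (hF : F ∈ A.sets)
    {E : Set BinSeq} (hE : E ∈ A.sets) :
    P.m (E ∩ F) = ∑ v ∈ Finset.univ.filter (fun v : Fin t → Bool => Cx t v ⊆ F),
      P.m (E ∩ Cx t v) := by
  classical
  have hEF : E ∩ F = ⋃ v ∈ Finset.univ.filter (fun v : Fin t → Bool => Cx t v ⊆ F),
      (E ∩ Cx t v) := by
    ext ω
    simp only [Set.mem_inter_iff, Set.mem_iUnion, Finset.mem_filter, Finset.mem_univ, true_and,
      exists_prop]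
    constructor
    · rintro ⟨hωE, hωF⟩
      exact ⟨proj t ω, hrep ω hωF, hωE, mem_Cx_proj t ω⟩
    · rintro ⟨v, hv, hωE, hωv⟩
      exact ⟨hωE, hv hωv⟩
  rw [hEF]
  apply m_biUnion
  · exact fun v _ => inter_mem hE (Cx_mem hcyl t v)
  · intro i _ j _ hij
    exact (Cx_disjoint hij).mono Set.inter_subset_right Set.inter_subset_right

lemma nu_split {t : ℕ} (c : (Fin t → Bool) → ℝ) (θ' : ℝ) {F : Set BinSeq}
    (hrep : ∀ ω ∈ F, Cx t (proj t ω) ⊆ F) (hF : F ∈ A.sets)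
    {E : Set BinSeq} (hE : E ∈ A.sets) :
    nu P t (fun v => c v + (if Cx t v ⊆ F then θ' else 0)) E
      = nu P t c E + θ' * P.m (E ∩ F) := by
  classical
  rw [nu, nu, m_inter_cylset hcyl P hrep hF hE, Finset.mul_sum,
    ← Finset.sum_filter_add_sum_filter_not Finset.univ (fun v : Fin t → Bool => Cx t v ⊆ F)
      (fun v => c v * P.m (E ∩ Cx t v))]
  rw [← Finset.sum_filter_add_sum_filter_not Finset.univ (fun v : Fin t → Bool => Cx t v ⊆ F)
      (fun v => (c v + if Cx t v ⊆ F then θ' else 0) * P.m (E ∩ Cx t v))]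
  have h1 : ∑ v ∈ Finset.univ.filter (fun v : Fin t → Bool => Cx t v ⊆ F),
      (c v + if Cx t v ⊆ F then θ' else 0) * P.m (E ∩ Cx t v)
      = ∑ v ∈ Finset.univ.filter (fun v : Fin t → Bool => Cx t v ⊆ F),
        (c v * P.m (E ∩ Cx t v) + θ' * P.m (E ∩ Cx t v)) := by
    apply Finset.sum_congr rfl
    intro v hv
    rw [if_pos (Finset.mem_filter.1 hv).2]; ring
  have h2 : ∑ v ∈ Finset.univ.filter (fun v : Fin t → Bool => ¬ Cx t v ⊆ F),
      (c v + if Cx t v ⊆ F then θ' else 0) * P.m (E ∩ Cx t v)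
      = ∑ v ∈ Finset.univ.filter (fun v : Fin t → Bool => ¬ Cx t v ⊆ F),
        c v * P.m (E ∩ Cx t v) := by
    apply Finset.sum_congr rfl
    intro v hv
    rw [if_neg (Finset.mem_filter.1 hv).2]; ring
  rw [h1, h2, Finset.sum_add_distrib]
  ring

end NU


open Filter Topology Set
open scoped Classical

variable {A : SetAlgebra BinSeq}

/-- Invariant for the exhaustion argument. -/
def ReachProp (P Q : FA A) (η δ₀ κ κ' : ℝ) (k : ℕ) : Prop :=
  ∃ (s : ℕ) (c : (Fin s → Bool) → ℝ) (G : Set BinSeq),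
    (∀ w, 0 ≤ c w) ∧ G ∈ A.sets ∧ P.m G ≤ k * κ' ∧
    (∀ E ∈ A.sets, nu P s c E ≤ Q.m E + (η/4) * P.m (E ∩ G) + k * κ) ∧
    (k : ℝ) * (η * δ₀ / 8) ≤ nu P s c Set.univ

def StopProp (P Q : FA A) (η B : ℝ) : Prop :=
  ∃ (s : ℕ) (c : (Fin s → Bool) → ℝ),
    (∀ w, 0 ≤ c w) ∧ (∀ E ∈ A.sets, Q.m E - nu P s c E ≤ η) ∧
    (∀ E ∈ A.sets, nu P s c E - Q.m E ≤ B)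

section RN

variable (hcyl : ∀ (ω : BinSeq) (t : ℕ), cyl ω t ∈ A.sets)
variable (P Q : FA A)
include hcyl

lemma reach_zero (η δ₀ κ κ' : ℝ) : ReachProp P Q η δ₀ κ κ' 0 := by
  refine ⟨0, fun _ => 0, ∅, fun _ => le_rfl, empty_mem A, ?_, ?_, ?_⟩
  · rw [m_empty]; simp
  · intro E hE
    have h1 : nu P 0 (fun _ => (0:ℝ)) E = 0 := by
      rw [nu]; simp
    have h2 : 0 ≤ Q.m E := Q.nonneg E hE
    rw [h1, Set.inter_empty, m_empty P]
    push_cast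
    simp only [mul_zero, zero_mul, add_zero]
    linarith
  · have h1 : nu P 0 (fun _ => (0:ℝ)) Set.univ = 0 := by rw [nu]; simp
    rw [h1]; push_cast; simp

set_option maxHeartbeats 1000000 in
lemma reach_step (hQac : AbsCont P Q) (hext : ExtremePoint P)
    {η δ₀ κ κ' : ℝ} (hη : 0 < η) (hδ₀pos : 0 < δ₀)
    (hδ₀ : ∀ S ∈ A.sets, P.m S < δ₀ → Q.m S < 3*η/8)
    (hκpos : 0 < κ) (hκ : κ ≤ η/8) (hκ'pos : 0 < κ') (hκ' : κ' ≤ δ₀/2)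
    (hκκ' : (η/4) * κ' ≤ κ/2)
    (k : ℕ) (hreach : ReachProp P Q η δ₀ κ κ' k) :
    StopProp P Q η ((η/4) * ((k:ℝ)*κ') + (k:ℝ)*κ) ∨ ReachProp P Q η δ₀ κ κ' (k+1) := by
  obtain ⟨s, c, G, hc, hG, hPG, hinv, hmass⟩ := hreach
  by_cases hstop : ∀ E ∈ A.sets, Q.m E - nu P s c E ≤ η
  · left
    refine ⟨s, c, hc, hstop, fun E hE => ?_⟩
    have h1 := hinv E hE
    have h2 : P.m (E ∩ G) ≤ P.m G := m_mono P (inter_mem hE hG) hG Set.inter_subset_right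
    have h3 : (η/4) * P.m (E ∩ G) ≤ (η/4) * ((k:ℝ)*κ') := by
      apply mul_le_mul_of_nonneg_left (le_trans h2 hPG) (by positivity)
    linarith
  · right
    push_neg at hstop
    obtain ⟨E₀, hE₀, hE₀gt⟩ := hstop
    set ρ : Set BinSeq → ℝ := fun S => Q.m S - nu P s c S with hρdef
    clear_value ρ
    have hρadd : ∀ S ∈ A.sets, ∀ T ∈ A.sets, Disjoint S T → ρ (S ∪ T) = ρ S + ρ T := by
      intro S hS T hT hd
      simp only [hρdef]
      rw [Q.add S hS T hT hd, nu_add hcyl P c hS hT hd]; ring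
    have hρle : ∀ S ∈ A.sets, ρ S ≤ 1 := by
      intro S hS
      have ha := nu_nonneg hcyl P hc hS
      have hb := m_le_one Q hS
      simp only [hρdef]; linarith
    -- approximate Hahn set
    set Sμ : Set ℝ := {x : ℝ | ∃ S ∈ A.sets, ρ S - (η/2) * P.m S = x} with hSμdef
    have hSμne : Sμ.Nonempty := ⟨ρ ∅ - (η/2) * P.m ∅, ∅, empty_mem A, rfl⟩
    have hSμbdd : BddAbove Sμ := by
      refine ⟨1, fun x hx => ?_⟩
      obtain ⟨S, hS, rfl⟩ := hx
      have h1 := hρle S hS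
      have h2 : 0 ≤ (η/2) * P.m S := mul_nonneg (by positivity) (P.nonneg S hS)
      linarith
    set α := sSup Sμ with hαdef
    have hαup : ∀ S ∈ A.sets, ρ S - (η/2) * P.m S ≤ α :=
      fun S hS => le_csSup hSμbdd ⟨S, hS, rfl⟩
    have hαlb : η/2 < α := by
      have h1 := hαup E₀ hE₀
      have h2 : P.m E₀ ≤ 1 := m_le_one P hE₀
      have h3 : (η/2) * P.m E₀ ≤ η/2 := by nlinarith
      simp only [hρdef] at h1 ⊢
      linarith
    obtain ⟨x, hxmem, hxgt⟩ := exists_lt_of_lt_csSup hSμne (show α - κ/2 < α by linarith)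
    obtain ⟨H, hH, hHeq⟩ := hxmem
    have hμH : α - κ/2 < ρ H - (η/2) * P.m H := by rw [hHeq]; exact hxgt
    have hHahn : ∀ S ∈ A.sets, S ⊆ H → (η/2) * P.m S - κ/2 ≤ ρ S := by
      intro S hS hSH
      have h1 := hαup (H \ S) (diff_mem hH hS)
      have h2 : ρ H = ρ S + ρ (H \ S) := by
        rw [← hρadd S hS (H \ S) (diff_mem hH hS) Set.disjoint_sdiff_right,
          Set.union_diff_cancel hSH]
      have h3 : P.m (H \ S) = P.m H - P.m S := m_diff P hH hS hSH
      have h4 : (η/2) * P.m (H \ S) = (η/2) * P.m H - (η/2) * P.m S := by rw [h3]; ring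
      linarith
    have hρH : 3*η/8 < ρ H := by
      have h1 : 0 ≤ (η/2) * P.m H := mul_nonneg (by positivity) (P.nonneg H hH)
      linarith
    have hQH : 3*η/8 < Q.m H := by
      have := nu_nonneg hcyl P hc hH
      simp only [hρdef] at hρH; linarith
    have hPH : δ₀ ≤ P.m H := by
      by_contra hlt
      push_neg at hlt
      exact absurd (hδ₀ H hH hlt) (by linarith)
    -- cylinder approximation of H
    obtain ⟨t₁, W₁, hFapp⟩ := density hcyl P hext hH hκ'pos
    set F : Set BinSeq := ⋃ v ∈ W₁, Cx t₁ v with hFdef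
    have hF : F ∈ A.sets := biUnion_mem W₁ _ (fun v _ => Cx_mem hcyl t₁ v)
    have hPFH : P.m (F \ H) < κ' := by
      have hsub : F \ H ⊆ (H \ F) ∪ (F \ H) := Set.subset_union_right
      have := m_mono P (diff_mem hF hH)
        (A.union_mem _ (diff_mem hH hF) _ (diff_mem hF hH)) hsub
      linarith
    have hPHF : P.m (H \ F) < κ' := by
      have hsub : H \ F ⊆ (H \ F) ∪ (F \ H) := Set.subset_union_left
      have := m_mono P (diff_mem hH hF)
        (A.union_mem _ (diff_mem hH hF) _ (diff_mem hF hH)) hsub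
      linarith
    set t := max s t₁ with htdef
    have hst : s ≤ t := le_max_left s t₁
    have ht₁ : t₁ ≤ t := le_max_right s t₁
    have hFrep : ∀ ω ∈ F, Cx t (proj t ω) ⊆ F := cylset_rep ht₁ W₁
    set c' : (Fin t → Bool) → ℝ :=
      fun v => c (res hst v) + (if Cx t v ⊆ F then η/4 else 0) with hc'def
    have hc' : ∀ v, 0 ≤ c' v := by
      intro v
      simp only [hc'def]
      have := hc (res hst v)
      split_ifs <;> [linarith; linarith]
    have hnusplit : ∀ E ∈ A.sets, nu P t c' E = nu P s c E + (η/4) * P.m (E ∩ F) := by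
      intro E hE
      rw [hc'def, nu_split hcyl P _ _ hFrep hF hE, ← nu_refine hcyl P hst c hE]
    set G' : Set BinSeq := G ∪ (F \ H) with hG'def
    have hG' : G' ∈ A.sets := A.union_mem _ hG _ (diff_mem hF hH)
    refine ⟨t, c', G', hc', hG', ?_, ?_, ?_⟩
    · -- P.m G' ≤ (k+1) κ'
      have h1 := m_union_le P hG (diff_mem hF hH)
      push_cast
      linarith
    · -- invariant
      intro E hE
      have hX1 : E ∩ F ∩ H ∈ A.sets := inter_mem (inter_mem hE hF) hH
      have hX2 : E \ (F ∩ H) ∈ A.sets := diff_mem hE (inter_mem hF hH)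
      have hEdec : E = (E ∩ F ∩ H) ∪ (E \ (F ∩ H)) := by
        ext ω
        simp only [Set.mem_union, Set.mem_inter_iff, Set.mem_diff]
        tauto
      have hEdisj : Disjoint (E ∩ F ∩ H) (E \ (F ∩ H)) := by
        rw [Set.disjoint_iff_inter_eq_empty]
        ext ω
        simp only [Set.mem_inter_iff, Set.mem_diff, Set.mem_empty_iff_false, iff_false]
        tauto
      have hρE : ρ E = ρ (E ∩ F ∩ H) + ρ (E \ (F ∩ H)) := by
        conv_lhs => rw [hEdec]
        exact hρadd _ hX1 _ hX2 hEdisj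
      have hρX1 : (η/2) * P.m (E ∩ F ∩ H) - κ/2 ≤ ρ (E ∩ F ∩ H) :=
        hHahn _ hX1 (Set.inter_subset_right)
      have hρX2 : -((η/4) * P.m ((E \ (F ∩ H)) ∩ G) + (k:ℝ)*κ) ≤ ρ (E \ (F ∩ H)) := by
        have := hinv (E \ (F ∩ H)) hX2
        simp only [hρdef]
        linarith
      have hPEF : P.m (E ∩ F) = P.m (E ∩ F ∩ H) + P.m ((E ∩ F) \ H) := by
        have hdec : E ∩ F = (E ∩ F ∩ H) ∪ ((E ∩ F) \ H) := by
          ext ω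
          simp only [Set.mem_union, Set.mem_inter_iff, Set.mem_diff]
          tauto
        have hdisj : Disjoint (E ∩ F ∩ H) ((E ∩ F) \ H) := by
          rw [Set.disjoint_iff_inter_eq_empty]
          ext ω
          simp only [Set.mem_inter_iff, Set.mem_diff, Set.mem_empty_iff_false, iff_false]
          tauto
        conv_lhs => rw [hdec]
        exact P.add _ hX1 _ (diff_mem (inter_mem hE hF) hH) hdisj
      have hEFH : (E ∩ F) \ H = E ∩ (F \ H) := by
        ext ω
        simp only [Set.mem_inter_iff, Set.mem_diff]
        tauto
      have hsub1 : P.m ((E \ (F ∩ H)) ∩ G) ≤ P.m (E ∩ G) := by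
        apply m_mono P (inter_mem hX2 hG) (inter_mem hE hG)
        intro ω hω
        exact ⟨hω.1.1, hω.2⟩
      have hG'incl : P.m (E ∩ G') = P.m (E ∩ G) + P.m (E ∩ (F \ H)) - P.m ((E ∩ G) ∩ (E ∩ (F \ H))) := by
        have hdec : E ∩ G' = (E ∩ G) ∪ (E ∩ (F \ H)) := by
          rw [hG'def, Set.inter_union_distrib_left]
        rw [hdec]
        exact m_union_inter P (inter_mem hE hG) (inter_mem hE (diff_mem hF hH))
      have hovl : P.m ((E ∩ G) ∩ (E ∩ (F \ H))) ≤ κ' := by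
        have h1 : (E ∩ G) ∩ (E ∩ (F \ H)) ⊆ F \ H := fun ω hω => hω.2.2
        have := m_mono P (inter_mem (inter_mem hE hG) (inter_mem hE (diff_mem hF hH)))
          (diff_mem hF hH) h1
        linarith
      have hnu := hnusplit E hE
      have hPX1nn : 0 ≤ P.m (E ∩ F ∩ H) := P.nonneg _ hX1
      have hρlow : (η/2) * P.m (E ∩ F ∩ H) - κ/2
          - ((η/4) * P.m ((E \ (F ∩ H)) ∩ G) + (k:ℝ)*κ) ≤ ρ E := by
        rw [hρE]; linarith
      have final : nu P t c' E - Q.m E ≤ (η/4) * P.m (E ∩ G') + ((k:ℝ)+1) * κ := by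
        have hexp : nu P t c' E - Q.m E = (η/4) * P.m (E ∩ F) - ρ E := by
          rw [hnu]; simp only [hρdef]; ring
        rw [hexp, hPEF, hEFH]
        have h5 : (η/4) * P.m ((E \ (F ∩ H)) ∩ G) ≤ (η/4) * P.m (E ∩ G) :=
          mul_le_mul_of_nonneg_left hsub1 (by positivity)
        nlinarith [hρlow, hG'incl, hovl, hκκ', hPX1nn, hη]
      push_cast
      linarith [final]
    · -- mass gain
      have h1 := hnusplit Set.univ A.univ_mem
      rw [Set.univ_inter] at h1
      have hPF : δ₀ - κ' ≤ P.m F := by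
        have h2 : P.m H ≤ P.m F + P.m (H \ F) := by
          have hsub : H ⊆ F ∪ (H \ F) := by
            intro ω hω
            by_cases hωF : ω ∈ F
            · exact Or.inl hωF
            · exact Or.inr ⟨hω, hωF⟩
          have := m_mono P hH (A.union_mem _ hF _ (diff_mem hH hF)) hsub
          have := m_union_le P hF (diff_mem hH hF)
          linarith
        linarith
      have h3 : (η/4) * (δ₀/2) ≤ (η/4) * P.m F := by
        apply mul_le_mul_of_nonneg_left _ (by positivity)
        linarith
      rw [h1]
      push_cast
      nlinarith [hmass]

end RN


open Filter Topology Set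

variable {A : SetAlgebra BinSeq}

theorem rnApprox (hcyl : ∀ (ω : BinSeq) (t : ℕ), cyl ω t ∈ A.sets)
    (P Q : FA A) (hQac : AbsCont P Q) (hext : ExtremePoint P)
    {η : ℝ} (hη : 0 < η) :
    ∃ (s : ℕ) (c : (Fin s → Bool) → ℝ),
      (∀ w, 0 ≤ c w) ∧ ∀ E ∈ A.sets, |Q.m E - nu P s c E| ≤ η := by
  obtain ⟨δ₀, hδ₀pos, hδ₀⟩ := unif_ac P Q hQac (3*η/8) (by positivity)
  set g : ℝ := η * δ₀ / 8 with hgdef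
  have hgpos : 0 < g := by positivity
  set K : ℕ := Nat.ceil ((2+η)/g) with hKdef
  have hKg : 2 + η ≤ (K:ℝ) * g := by
    have h1 : (2+η)/g ≤ (K:ℝ) := Nat.le_ceil _
    calc 2 + η = ((2+η)/g) * g := by field_simp
    _ ≤ (K:ℝ) * g := by apply mul_le_mul_of_nonneg_right h1 (le_of_lt hgpos)
  set κ : ℝ := η/(8*((K:ℝ)+1)) with hκdef
  have hκpos : 0 < κ := by positivity
  have hKcast : (0:ℝ) ≤ (K:ℝ) := Nat.cast_nonneg K
  have hκle : κ ≤ η/8 := by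
    rw [hκdef]
    apply div_le_div_of_nonneg_left (le_of_lt hη) (by norm_num) ?_
    nlinarith
  have hκK : ((K:ℝ)+1) * κ ≤ η/8 := by
    rw [hκdef]
    rw [mul_div_assoc']
    rw [div_le_div_iff₀ (by positivity) (by norm_num)]
    ring_nf
    nlinarith
  set κ' : ℝ := min (min (δ₀/2) (1/((K:ℝ)+1))) (κ/(η+1)) with hκ'def
  have hκ'pos : 0 < κ' := by
    apply lt_min (lt_min (by positivity) (by positivity)) (by positivity)
  have hκ'δ : κ' ≤ δ₀/2 := le_trans (min_le_left _ _) (min_le_left _ _)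
  have hκ'K : ((K:ℝ)+1) * κ' ≤ 1 := by
    have h1 : κ' ≤ 1/((K:ℝ)+1) := le_trans (min_le_left _ _) (min_le_right _ _)
    rw [← le_div_iff₀' (by positivity)]
    exact h1
  have hκκ' : (η/4) * κ' ≤ κ/2 := by
    have h1 : κ' ≤ κ/(η+1) := min_le_right _ _
    have h2 : (η/4) * κ' ≤ (η/4) * (κ/(η+1)) :=
      mul_le_mul_of_nonneg_left h1 (by positivity)
    have h3 : (η/4) * (κ/(η+1)) ≤ κ/2 := by
      have hpos : (0:ℝ) < η + 1 := by linarith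
      rw [div_mul_div_comm, div_le_div_iff₀ (by positivity) (by norm_num : (0:ℝ) < 2)]
      nlinarith [hκpos]
    linarith
  -- the induction
  have main : ∀ k : ℕ, k ≤ K + 1 →
      (StopProp P Q η ((η/4) * (((K:ℝ)+1)*κ') + (((K:ℝ)+1))*κ) ∨ ReachProp P Q η δ₀ κ κ' k) := by
    intro k
    induction k with
    | zero => intro _; right; exact reach_zero hcyl P Q η δ₀ κ κ'
    | succ n ih =>
      intro hn
      rcases ih (le_trans (Nat.le_succ n) hn) with hgoal | hreach
      · left; exact hgoal
      · rcases reach_step hcyl P Q hQac hext hη hδ₀pos hδ₀ hκpos hκle hκ'pos hκ'δ hκκ' n hreach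
          with hstop | hreach'
        · left
          obtain ⟨s, c, hc, h1, h2⟩ := hstop
          refine ⟨s, c, hc, h1, fun E hE => ?_⟩
          have h3 := h2 E hE
          have hnK : (n:ℝ) ≤ (K:ℝ)+1 := by
            have : (n:ℕ) ≤ K + 1 := le_trans (Nat.le_succ n) hn
            exact_mod_cast le_trans this (le_refl _)
          have h4 : (η/4) * ((n:ℝ)*κ') ≤ (η/4) * (((K:ℝ)+1)*κ') := by
            apply mul_le_mul_of_nonneg_left _ (by positivity)
            exact mul_le_mul_of_nonneg_right hnK (le_of_lt hκ'pos)
          have h5 : (n:ℝ)*κ ≤ ((K:ℝ)+1)*κ := mul_le_mul_of_nonneg_right hnK (le_of_lt hκpos)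
          linarith
        · right; exact hreach'
  rcases main (K+1) le_rfl with hstop | hreach
  · obtain ⟨s, c, hc, h1, h2⟩ := hstop
    refine ⟨s, c, hc, fun E hE => ?_⟩
    rw [abs_le]
    constructor
    · have h3 := h2 E hE
      have h4 : (η/4) * (((K:ℝ)+1)*κ') ≤ η/4 := by
        have := mul_le_mul_of_nonneg_left hκ'K (show (0:ℝ) ≤ η/4 by positivity)
        simpa using this
      have h5 : ((K:ℝ)+1)*κ ≤ η/8 := hκK
      linarith
    · exact h1 E hE
  · exfalso
    obtain ⟨s, c, G, hc, hG, hPG, hinv, hmass⟩ := hreach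
    have h1 := hinv Set.univ A.univ_mem
    rw [Set.univ_inter, Q.total] at h1
    have h2 : (η/4) * P.m G ≤ η/4 := by
      have h3 : P.m G ≤ ((K:ℝ)+1) * κ' := by
        push_cast at hPG; exact hPG
      have h4 : (η/4) * P.m G ≤ (η/4) * (((K:ℝ)+1)*κ') :=
        mul_le_mul_of_nonneg_left h3 (by positivity)
      have h5 := mul_le_mul_of_nonneg_left hκ'K (show (0:ℝ) ≤ η/4 by positivity)
      simp only [mul_one] at h5
      linarith
    have h6 : ((K:ℝ)+1) * κ ≤ η/8 := hκK
    have h7 : (((K:ℕ)+1:ℕ):ℝ) * g ≤ nu P s c Set.univ := by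
      push_cast at hmass ⊢
      rw [hgdef]
      exact hmass
    have h8 : (((K:ℕ)+1:ℕ):ℝ) * κ ≤ η/8 := by push_cast; exact hκK
    have h9 : 2 + η ≤ ((K:ℝ)+1) * g := by
      have := mul_le_mul_of_nonneg_right (show (K:ℝ) ≤ (K:ℝ)+1 by linarith) (le_of_lt hgpos)
      linarith
    push_cast at h7 h1
    nlinarith [h7, h1, h2, h6, h9]


open Filter Topology Set
open scoped Classical

variable {A : SetAlgebra BinSeq}

section KEY

variable (hcyl : ∀ (ω : BinSeq) (t : ℕ), cyl ω t ∈ A.sets)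
variable (P : FA A)
include hcyl

lemma nu_of_subset {s : ℕ} (c : (Fin s → Bool) → ℝ) {E : Set BinSeq} (hE : E ∈ A.sets)
    {w₀ : Fin s → Bool} (hsub : E ⊆ Cx s w₀) :
    nu P s c E = c w₀ * P.m E := by
  rw [nu]
  rw [Finset.sum_eq_single w₀]
  · rw [Set.inter_eq_self_of_subset_left hsub]
  · intro w _ hw
    have hdisj : E ∩ Cx s w = ∅ := by
      rw [Set.eq_empty_iff_forall_notMem]
      rintro ω ⟨h1, h2⟩
      exact hw ((((proj_eq_of_mem (hsub h1)).symm).trans (proj_eq_of_mem h2)).symm)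
    rw [hdisj, m_empty, mul_zero]
  · intro h
    exact absurd (Finset.mem_univ w₀) h

lemma nu_finsum {s : ℕ} (c : (Fin s → Bool) → ℝ) {ι : Type*} (I : Finset ι)
    (f : ι → Set BinSeq) (hf : ∀ i ∈ I, f i ∈ A.sets)
    (hd : ∀ i ∈ I, ∀ j ∈ I, i ≠ j → Disjoint (f i) (f j)) :
    nu P s c (⋃ i ∈ I, f i) = ∑ i ∈ I, nu P s c (f i) := by
  rw [nu]
  have h1 : ∀ w : Fin s → Bool, P.m ((⋃ i ∈ I, f i) ∩ Cx s w)
      = ∑ i ∈ I, P.m (f i ∩ Cx s w) := by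
    intro w
    have h2 : (⋃ i ∈ I, f i) ∩ Cx s w = ⋃ i ∈ I, (f i ∩ Cx s w) := by
      ext ω
      simp only [Set.mem_inter_iff, Set.mem_iUnion, exists_prop]
      tauto
    rw [h2]
    apply m_biUnion
    · exact fun i hi => inter_mem (hf i hi) (Cx_mem hcyl s w)
    · intro i hi j hj hij
      exact (hd i hi j hj hij).mono Set.inter_subset_left Set.inter_subset_left
  calc ∑ w : Fin s → Bool, c w * P.m ((⋃ i ∈ I, f i) ∩ Cx s w)
      = ∑ w : Fin s → Bool, ∑ i ∈ I, c w * P.m (f i ∩ Cx s w) := by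
        apply Finset.sum_congr rfl
        intro w _
        rw [h1 w, Finset.mul_sum]
    _ = ∑ i ∈ I, ∑ w : Fin s → Bool, c w * P.m (f i ∩ Cx s w) := Finset.sum_comm
    _ = ∑ i ∈ I, nu P s c (f i) := rfl

theorem key (Q : FA A) (hQac : AbsCont P Q) (hext : ExtremePoint P)
    {η : ℝ} (hη : 0 < η) :
    ∃ s : ℕ, ∀ t, s ≤ t → ∀ Ef : (Fin t → Bool) → Set BinSeq,
      (∀ v, Ef v ∈ A.sets ∧ Ef v ⊆ Cx t v) →
      ∑ v : Fin t → Bool, (Q.m (Ef v) - Q.m (Cx t v) * P.cond (Ef v) (Cx t v)) ≤ 3 * η := by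
  obtain ⟨s, c, hc, happ⟩ := rnApprox hcyl P Q hQac hext hη
  refine ⟨s, fun t hst Ef hEf => ?_⟩
  have hdisj : ∀ i : Fin t → Bool, ∀ j : Fin t → Bool, i ≠ j → Disjoint (Ef i) (Ef j) :=
    fun i j hij => (Cx_disjoint hij).mono (hEf i).2 (hEf j).2
  -- (1) total Q mass controlled by nu
  have hQsum : ∑ v : Fin t → Bool, Q.m (Ef v)
      ≤ ∑ v : Fin t → Bool, nu P s c (Ef v) + η := by
    have hU : (⋃ v ∈ (Finset.univ : Finset (Fin t → Bool)), Ef v) ∈ A.sets :=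
      biUnion_mem _ _ (fun v _ => (hEf v).1)
    have h1 : Q.m (⋃ v ∈ (Finset.univ : Finset (Fin t → Bool)), Ef v)
        = ∑ v : Fin t → Bool, Q.m (Ef v) :=
      m_biUnion Q _ _ (fun v _ => (hEf v).1) (fun i _ j _ hij => hdisj i j hij)
    have h2 : nu P s c (⋃ v ∈ (Finset.univ : Finset (Fin t → Bool)), Ef v)
        = ∑ v : Fin t → Bool, nu P s c (Ef v) :=
      nu_finsum hcyl P c _ _ (fun v _ => (hEf v).1) (fun i _ j _ hij => hdisj i j hij)
    have h3 := (abs_le.1 (happ _ hU)).2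
    rw [h1, h2] at h3
    linarith
  -- (2) per-cylinder estimate
  have hper : ∀ v : Fin t → Bool,
      nu P s c (Ef v) - Q.m (Cx t v) * P.cond (Ef v) (Cx t v)
        ≤ |nu P s c (Cx t v) - Q.m (Cx t v)| := by
    intro v
    have hCv := Cx_mem hcyl t v
    have hEv := (hEf v).1
    have hsubv : Ef v ⊆ Cx s (res hst v) := Set.Subset.trans (hEf v).2 (Cx_subset_res hst v)
    have hnuE : nu P s c (Ef v) = c (res hst v) * P.m (Ef v) :=
      nu_of_subset hcyl P c hEv hsubv
    have hnuC : nu P s c (Cx t v) = c (res hst v) * P.m (Cx t v) :=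
      nu_of_subset hcyl P c hCv (Cx_subset_res hst v)
    have hPE0 : 0 ≤ P.m (Ef v) := P.nonneg _ hEv
    have hPC0 : 0 ≤ P.m (Cx t v) := P.nonneg _ hCv
    have hPEC : P.m (Ef v) ≤ P.m (Cx t v) := m_mono P hEv hCv (hEf v).2
    rcases eq_or_lt_of_le hPC0 with h0 | h0
    · -- P(C) = 0
      have hE0 : P.m (Ef v) = 0 := le_antisymm (h0 ▸ hPEC) hPE0
      rw [hnuE, hE0, mul_zero, FA.cond, ← h0, div_zero, mul_zero, sub_zero]
      exact abs_nonneg _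
    · -- P(C) > 0
      have hcond : P.cond (Ef v) (Cx t v) = P.m (Ef v) / P.m (Cx t v) := by
        rw [FA.cond, Set.inter_eq_self_of_subset_left (hEf v).2]
      rw [hnuE, hnuC, hcond]
      have hratio0 : 0 ≤ P.m (Ef v) / P.m (Cx t v) := div_nonneg hPE0 (le_of_lt h0)
      have hratio1 : P.m (Ef v) / P.m (Cx t v) ≤ 1 := by
        rw [div_le_one h0]; exact hPEC
      have hkey : c (res hst v) * P.m (Ef v) - Q.m (Cx t v) * (P.m (Ef v) / P.m (Cx t v))
          = (P.m (Ef v) / P.m (Cx t v)) * (c (res hst v) * P.m (Cx t v) - Q.m (Cx t v)) := by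
        field_simp
      rw [hkey]
      calc (P.m (Ef v) / P.m (Cx t v)) * (c (res hst v) * P.m (Cx t v) - Q.m (Cx t v))
          ≤ |(P.m (Ef v) / P.m (Cx t v)) * (c (res hst v) * P.m (Cx t v) - Q.m (Cx t v))| :=
            le_abs_self _
        _ = (P.m (Ef v) / P.m (Cx t v)) * |c (res hst v) * P.m (Cx t v) - Q.m (Cx t v)| := by
            rw [abs_mul, abs_of_nonneg hratio0]
        _ ≤ 1 * |c (res hst v) * P.m (Cx t v) - Q.m (Cx t v)| := by
            apply mul_le_mul_of_nonneg_right hratio1 (abs_nonneg _)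
        _ = |c (res hst v) * P.m (Cx t v) - Q.m (Cx t v)| := one_mul _
  -- (3) total variation of nu - Q over the level-t partition
  have htv : ∑ v : Fin t → Bool, |nu P s c (Cx t v) - Q.m (Cx t v)| ≤ 2 * η := by
    set T : Finset (Fin t → Bool) :=
      Finset.univ.filter (fun v => Q.m (Cx t v) ≤ nu P s c (Cx t v)) with hTdef
    have hsplit := Finset.sum_filter_add_sum_filter_not Finset.univ
      (fun v => Q.m (Cx t v) ≤ nu P s c (Cx t v))
      (fun v => |nu P s c (Cx t v) - Q.m (Cx t v)|)
    have hsum1 : ∑ v ∈ T, |nu P s c (Cx t v) - Q.m (Cx t v)|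
        = nu P s c (⋃ v ∈ T, Cx t v) - Q.m (⋃ v ∈ T, Cx t v) := by
      rw [nu_finsum hcyl P c T _ (fun v _ => Cx_mem hcyl t v)
          (fun i _ j _ hij => Cx_disjoint hij),
        m_biUnion Q T _ (fun v _ => Cx_mem hcyl t v) (fun i _ j _ hij => Cx_disjoint hij),
        ← Finset.sum_sub_distrib]
      apply Finset.sum_congr rfl
      intro v hv
      rw [hTdef] at hv
      exact abs_of_nonneg (sub_nonneg.2 (Finset.mem_filter.1 hv).2)
    have hsum2 : ∑ v ∈ Finset.univ.filter
          (fun v => ¬ Q.m (Cx t v) ≤ nu P s c (Cx t v)), |nu P s c (Cx t v) - Q.m (Cx t v)|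
        = Q.m (⋃ v ∈ Finset.univ.filter
            (fun v => ¬ Q.m (Cx t v) ≤ nu P s c (Cx t v)), Cx t v)
          - nu P s c (⋃ v ∈ Finset.univ.filter
            (fun v => ¬ Q.m (Cx t v) ≤ nu P s c (Cx t v)), Cx t v) := by
      rw [nu_finsum hcyl P c _ _ (fun v _ => Cx_mem hcyl t v)
          (fun i _ j _ hij => Cx_disjoint hij),
        m_biUnion Q _ _ (fun v _ => Cx_mem hcyl t v) (fun i _ j _ hij => Cx_disjoint hij),
        ← Finset.sum_sub_distrib]
      apply Finset.sum_congr rfl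
      intro v hv
      have := (Finset.mem_filter.1 hv).2
      push_neg at this
      rw [abs_of_neg (sub_neg.2 this)]
      ring
    have hb1 : nu P s c (⋃ v ∈ T, Cx t v) - Q.m (⋃ v ∈ T, Cx t v) ≤ η := by
      have hmem : (⋃ v ∈ T, Cx t v) ∈ A.sets := biUnion_mem _ _ (fun v _ => Cx_mem hcyl t v)
      have := (abs_le.1 (happ _ hmem)).1
      linarith
    have hb2 : Q.m (⋃ v ∈ Finset.univ.filter
          (fun v => ¬ Q.m (Cx t v) ≤ nu P s c (Cx t v)), Cx t v)
        - nu P s c (⋃ v ∈ Finset.univ.filter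
          (fun v => ¬ Q.m (Cx t v) ≤ nu P s c (Cx t v)), Cx t v) ≤ η := by
      have hmem : (⋃ v ∈ Finset.univ.filter
          (fun v => ¬ Q.m (Cx t v) ≤ nu P s c (Cx t v)), Cx t v) ∈ A.sets :=
        biUnion_mem _ _ (fun v _ => Cx_mem hcyl t v)
      have := (abs_le.1 (happ _ hmem)).2
      linarith
    rw [← hsplit]
    rw [hTdef] at hsum1
    linarith [hsum1, hsum2, hb1, hb2]
  calc ∑ v : Fin t → Bool, (Q.m (Ef v) - Q.m (Cx t v) * P.cond (Ef v) (Cx t v))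
      = ∑ v : Fin t → Bool, Q.m (Ef v)
        - ∑ v : Fin t → Bool, Q.m (Cx t v) * P.cond (Ef v) (Cx t v) := by
        rw [Finset.sum_sub_distrib]
    _ ≤ (∑ v : Fin t → Bool, nu P s c (Ef v) + η)
        - ∑ v : Fin t → Bool, Q.m (Cx t v) * P.cond (Ef v) (Cx t v) := by linarith
    _ = η + ∑ v : Fin t → Bool,
          (nu P s c (Ef v) - Q.m (Cx t v) * P.cond (Ef v) (Cx t v)) := by
        rw [Finset.sum_sub_distrib]; ring
    _ ≤ η + ∑ v : Fin t → Bool, |nu P s c (Cx t v) - Q.m (Cx t v)| := by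
        have := Finset.sum_le_sum (fun v (_ : v ∈ Finset.univ) => hper v)
        linarith
    _ ≤ η + 2 * η := by linarith
    _ = 3 * η := by ring

end KEY


open Filter Topology Set
open scoped Classical

variable {A : SetAlgebra BinSeq}

lemma choose_bad_set (hcyl : ∀ (ω : BinSeq) (t : ℕ), cyl ω t ∈ A.sets)
    (P Q : FA A) (hQac : AbsCont P Q) {ε : ℝ} (hε : 0 < ε) (t : ℕ) (v : Fin t → Bool)
    (hv : ∃ E ∈ A.sets, ε < |P.cond E (Cx t v) - Q.cond E (Cx t v)|) :
    ∃ Ev, (Ev ∈ A.sets ∧ Ev ⊆ Cx t v) ∧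
      ε * Q.m (Cx t v) ≤ Q.m Ev - Q.m (Cx t v) * P.cond Ev (Cx t v) := by
  have hC := Cx_mem hcyl t v
  by_cases hQ0 : Q.m (Cx t v) = 0
  · refine ⟨∅, ⟨empty_mem A, Set.empty_subset _⟩, ?_⟩
    have h1 : P.cond ∅ (Cx t v) = 0 := by
      rw [FA.cond, Set.empty_inter, m_empty, zero_div]
    rw [h1, hQ0, m_empty]
    simp
  · have hQpos : 0 < Q.m (Cx t v) := lt_of_le_of_ne (Q.nonneg _ hC) (Ne.symm hQ0)
    have hP0 : P.m (Cx t v) ≠ 0 := by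
      intro h
      exact hQ0 (ac_zero P Q hQac hC h)
    have hPpos : 0 < P.m (Cx t v) := lt_of_le_of_ne (P.nonneg _ hC) (Ne.symm hP0)
    obtain ⟨E, hEA, hεlt⟩ := hv
    have hE'A : E ∩ Cx t v ∈ A.sets := inter_mem hEA hC
    have hPsub : P.m (E ∩ Cx t v) ≤ P.m (Cx t v) :=
      m_mono P hE'A hC Set.inter_subset_right
    have hQsub : Q.m (E ∩ Cx t v) ≤ Q.m (Cx t v) :=
      m_mono Q hE'A hC Set.inter_subset_right
    have hPcond : P.cond E (Cx t v) = P.m (E ∩ Cx t v) / P.m (Cx t v) := rfl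
    have hQcond : Q.cond E (Cx t v) = Q.m (E ∩ Cx t v) / Q.m (Cx t v) := rfl
    rcases lt_abs.1 hεlt with h | h
    · -- ε < P.cond - Q.cond ; take the complement within the cylinder
      set Ev := Cx t v \ (E ∩ Cx t v) with hEvdef
      have hEvA : Ev ∈ A.sets := diff_mem hC hE'A
      have hEvsub : Ev ⊆ Cx t v := Set.diff_subset
      refine ⟨Ev, ⟨hEvA, hEvsub⟩, ?_⟩
      have hQEv : Q.m Ev = Q.m (Cx t v) - Q.m (E ∩ Cx t v) :=
        m_diff Q hC hE'A Set.inter_subset_right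
      have hPEv : P.m Ev = P.m (Cx t v) - P.m (E ∩ Cx t v) :=
        m_diff P hC hE'A Set.inter_subset_right
      have hPcondEv : P.cond Ev (Cx t v) = P.m Ev / P.m (Cx t v) := by
        rw [FA.cond, Set.inter_eq_self_of_subset_left hEvsub]
      rw [hPcondEv]
      have hiden : Q.m Ev - Q.m (Cx t v) * (P.m Ev / P.m (Cx t v))
          = Q.m (Cx t v) * (P.m (E ∩ Cx t v) / P.m (Cx t v)
              - Q.m (E ∩ Cx t v) / Q.m (Cx t v)) := by
        rw [hQEv, hPEv]
        field_simp
        ring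
      rw [hiden]
      rw [hPcond, hQcond] at h
      have := mul_le_mul_of_nonneg_left (le_of_lt h) (le_of_lt hQpos)
      linarith [this]
    · -- ε < Q.cond - P.cond ; take the set itself
      set Ev := E ∩ Cx t v with hEvdef
      have hEvsub : Ev ⊆ Cx t v := Set.inter_subset_right
      refine ⟨Ev, ⟨hE'A, hEvsub⟩, ?_⟩
      have hPcondEv : P.cond Ev (Cx t v) = P.m Ev / P.m (Cx t v) := by
        rw [FA.cond, Set.inter_eq_self_of_subset_left hEvsub]
      rw [hPcondEv]
      have hiden : Q.m Ev - Q.m (Cx t v) * (P.m Ev / P.m (Cx t v))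
          = Q.m (Cx t v) * (Q.m (E ∩ Cx t v) / Q.m (Cx t v)
              - P.m (E ∩ Cx t v) / P.m (Cx t v)) := by
        field_simp
        ring
      rw [hiden]
      rw [hPcond, hQcond] at h
      have h2 : ε < Q.m (E ∩ Cx t v) / Q.m (Cx t v) - P.m (E ∩ Cx t v) / P.m (Cx t v) := by
        linarith
      have := mul_le_mul_of_nonneg_left (le_of_lt h2) (le_of_lt hQpos)
      linarith [this]

theorem main_theorem
    (hcyl : ∀ (ω : BinSeq) (t : ℕ), cyl ω t ∈ A.sets)
    (P : FA A) (hext : ExtremePoint P) : BDProp P := by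
  intro Q hQac ε hε
  rw [Metric.tendsto_atTop]
  intro η' hη'
  obtain ⟨s, hkey⟩ := key hcyl P Q hQac hext (show (0:ℝ) < ε * η' / 6 by positivity)
  refine ⟨s, fun t ht => ?_⟩
  set Bad : Finset (Fin t → Bool) := Finset.univ.filter
    (fun v => ∃ E ∈ A.sets, ε < |P.cond E (Cx t v) - Q.cond E (Cx t v)|) with hBaddef
  have hD : {ω | ∃ E ∈ A.sets, ε < |P.cond E (cyl ω t) - Q.cond E (cyl ω t)|}
      = ⋃ v ∈ Bad, Cx t v := by
    ext ω
    simp only [Set.mem_setOf_eq, Set.mem_iUnion, exists_prop]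
    constructor
    · intro hω
      refine ⟨proj t ω, ?_, mem_Cx_proj t ω⟩
      rw [hBaddef]
      refine Finset.mem_filter.2 ⟨Finset.mem_univ _, ?_⟩
      rwa [cyl_eq_Cx] at hω
    · rintro ⟨v, hv, hωv⟩
      rw [hBaddef] at hv
      have := (Finset.mem_filter.1 hv).2
      rw [cyl_eq_Cx, proj_eq_of_mem hωv]
      exact this
  have hDmem : (⋃ v ∈ Bad, Cx t v) ∈ A.sets := biUnion_mem _ _ (fun v _ => Cx_mem hcyl t v)
  have hDQ : Q.m (⋃ v ∈ Bad, Cx t v) = ∑ v ∈ Bad, Q.m (Cx t v) :=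
    m_biUnion Q _ _ (fun v _ => Cx_mem hcyl t v) (fun i _ j _ hij => Cx_disjoint hij)
  -- choose witness sets
  have hchoice : ∀ v : Fin t → Bool, ∃ Ev, (Ev ∈ A.sets ∧ Ev ⊆ Cx t v) ∧
      ((v ∈ Bad → ε * Q.m (Cx t v) ≤ Q.m Ev - Q.m (Cx t v) * P.cond Ev (Cx t v)) ∧
       (v ∉ Bad → Q.m Ev - Q.m (Cx t v) * P.cond Ev (Cx t v) = 0)) := by
    intro v
    by_cases hv : v ∈ Bad
    · rw [hBaddef] at hv
      obtain ⟨Ev, hEv1, hEv2⟩ :=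
        choose_bad_set hcyl P Q hQac hε t v (Finset.mem_filter.1 hv).2
      exact ⟨Ev, hEv1, fun _ => hEv2, fun hcon => absurd (hBaddef ▸ hv) hcon⟩
    · refine ⟨∅, ⟨empty_mem A, Set.empty_subset _⟩, fun hcon => absurd hcon hv, fun _ => ?_⟩
      have h1 : P.cond ∅ (Cx t v) = 0 := by
        rw [FA.cond, Set.empty_inter, m_empty, zero_div]
      rw [h1, m_empty]
      ring
  choose Ef hEfmem hEfprop using hchoice
  have hsum := hkey t ht Ef hEfmem
  have hzero : ∀ v ∈ Finset.univ.filter (fun v => ¬ v ∈ Bad),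
      Q.m (Ef v) - Q.m (Cx t v) * P.cond (Ef v) (Cx t v) = 0 := by
    intro v hv
    exact (hEfprop v).2 (Finset.mem_filter.1 hv).2
  have hsplit := Finset.sum_filter_add_sum_filter_not Finset.univ (fun v => v ∈ Bad)
    (fun v => Q.m (Ef v) - Q.m (Cx t v) * P.cond (Ef v) (Cx t v))
  have hBadsum : ∑ v ∈ Finset.univ.filter (fun v => v ∈ Bad),
      (Q.m (Ef v) - Q.m (Cx t v) * P.cond (Ef v) (Cx t v)) ≤ 3 * (ε * η' / 6) := by
    have h2 : ∑ v ∈ Finset.univ.filter (fun v => ¬ v ∈ Bad),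
        (Q.m (Ef v) - Q.m (Cx t v) * P.cond (Ef v) (Cx t v)) = 0 :=
      Finset.sum_eq_zero hzero
    linarith [hsplit, hsum, h2]
  have hfilter : Finset.univ.filter (fun v => v ∈ Bad) = Bad := by
    ext v; simp
  rw [hfilter] at hBadsum
  have hlower : ∑ v ∈ Bad, ε * Q.m (Cx t v)
      ≤ ∑ v ∈ Bad, (Q.m (Ef v) - Q.m (Cx t v) * P.cond (Ef v) (Cx t v)) :=
    Finset.sum_le_sum (fun v hv => (hEfprop v).1 hv)
  have hQD : ε * Q.m (⋃ v ∈ Bad, Cx t v) ≤ 3 * (ε * η' / 6) := by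
    rw [hDQ, Finset.mul_sum]
    linarith
  have hQDnn : 0 ≤ Q.m (⋃ v ∈ Bad, Cx t v) := Q.nonneg _ hDmem
  have hfin : Q.m (⋃ v ∈ Bad, Cx t v) ≤ η' / 2 := by
    have h3 : 3 * (ε * η' / 6) = ε * (η'/2) := by ring
    rw [h3] at hQD
    exact le_of_mul_le_mul_left hQD hε
  rw [hD]
  rw [Real.dist_eq, sub_zero, abs_of_nonneg hQDnn]
  linarith

end BD


/-- Theorem 8, (1) ⟹ (2): if `P` is an extreme point of the set of
extensions of its restriction to the cylinder algebra, then `P` satisfies the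
Blackwell–Dubins property. -/
theorem extremePoint_implies_blackwellDubins
    (A : SetAlgebra BinSeq) (hσ : A.IsSigmaAlgebra)
    (hcyl : ∀ (ω : BinSeq) (t : ℕ), cyl ω t ∈ A.sets)
    (P : FA A) (hext : ExtremePoint P) : BDProp P := by
  exact BD.main_theorem hcyl P hext
end

section
/- (Plachky) Let A_1 ⊆ A_2 be algebras of subsets of a set Ω, let P be a finitely additive probability on A_1, and let Q be a finitely additive extension of P to A_2. Then Q is an extreme point of the convex set E(P, A_1, A_2) of all finitely additive extensions of P to A_2 if and only if for every ε > 0 and every A_2-measurable set B there exists an A_1-measurable set A with Q(B △ A) < ε. -/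
open Filter Topology


section PlachkyAux
variable {Ω : Type*}

open Classical in
/-- indicator function -/
noncomputable def ind (E : Set Ω) : Ω → ℝ := fun ω => if ω ∈ E then 1 else 0

lemma ind_nonneg (E : Set Ω) (ω : Ω) : 0 ≤ ind E ω := by
  unfold ind; split <;> norm_num

lemma ind_le_one (E : Set Ω) (ω : Ω) : ind E ω ≤ 1 := by
  unfold ind; split <;> norm_num

lemma ind_of_mem {E : Set Ω} {ω : Ω} (h : ω ∈ E) : ind E ω = 1 := by
  simp [ind, h]

lemma ind_of_not_mem {E : Set Ω} {ω : Ω} (h : ω ∉ E) : ind E ω = 0 := by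
  simp [ind, h]

lemma SetAlgebra.empty_mem (A : SetAlgebra Ω) : (∅ : Set Ω) ∈ A.sets := by
  have := A.compl_mem _ A.univ_mem
  simpa using this

lemma SetAlgebra.inter_mem (A : SetAlgebra Ω) {S T : Set Ω} (hS : S ∈ A.sets)
    (hT : T ∈ A.sets) : S ∩ T ∈ A.sets := by
  have h := A.compl_mem _ (A.union_mem _ (A.compl_mem _ hS) _ (A.compl_mem _ hT))
  simpa [Set.compl_union] using h

lemma SetAlgebra.diff_mem (A : SetAlgebra Ω) {S T : Set Ω} (hS : S ∈ A.sets)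
    (hT : T ∈ A.sets) : S \ T ∈ A.sets := by
  have := A.inter_mem hS (A.compl_mem _ hT)
  simpa [Set.diff_eq] using this

lemma SetAlgebra.symmDiff_mem (A : SetAlgebra Ω) {S T : Set Ω} (hS : S ∈ A.sets)
    (hT : T ∈ A.sets) : symmDiff S T ∈ A.sets := by
  have := A.union_mem _ (A.diff_mem hS hT) _ (A.diff_mem hT hS)
  simpa [Set.symmDiff_def] using this

variable {A : SetAlgebra Ω}

lemma FA.empty (μ : FA A) : μ.m ∅ = 0 := by
  have h := μ.add ∅ A.empty_mem ∅ A.empty_mem (by simp)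
  simp at h
  linarith

lemma FA.mono (μ : FA A) {S T : Set Ω} (hS : S ∈ A.sets) (hT : T ∈ A.sets)
    (hST : S ⊆ T) : μ.m S ≤ μ.m T := by
  have h := μ.add S hS (T \ S) (A.diff_mem hT hS) disjoint_sdiff_self_right
  rw [Set.union_diff_cancel hST] at h
  have := μ.nonneg (T \ S) (A.diff_mem hT hS)
  linarith

lemma FA.abs_sub_le (μ : FA A) {B S : Set Ω} (hB : B ∈ A.sets) (hS : S ∈ A.sets) :
    |μ.m B - μ.m S| ≤ μ.m (symmDiff B S) := by
  have key : ∀ X Y : Set Ω, X ∈ A.sets → Y ∈ A.sets →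
      μ.m X ≤ μ.m Y + μ.m (symmDiff X Y) := by
    intro X Y hX hY
    have hsplit : μ.m X = μ.m (X ∩ Y) + μ.m (X \ Y) := by
      have h := μ.add (X ∩ Y) (A.inter_mem hX hY) (X \ Y) (A.diff_mem hX hY)
        (by rw [Set.disjoint_iff]; intro ω hω; exact hω.2.2 hω.1.2)
      rw [← h, Set.inter_union_diff]
    have h1 : μ.m (X ∩ Y) ≤ μ.m Y :=
      μ.mono (A.inter_mem hX hY) hY Set.inter_subset_right
    have h2 : μ.m (X \ Y) ≤ μ.m (symmDiff X Y) := by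
      refine μ.mono (A.diff_mem hX hY) (A.symmDiff_mem hX hY) ?_
      rw [Set.symmDiff_def]; exact Set.subset_union_left
    linarith
  rw [abs_sub_le_iff]
  constructor
  · have := key B S hB hS; linarith
  · have := key S B hS hB; rw [symmDiff_comm] at this; linarith

end PlachkyAux

section PlachkyLists
variable {Ω : Type*} {A : SetAlgebra Ω}

/-- pointwise value of a formal combination of indicators -/
noncomputable def fnL (l : List (ℝ × Set Ω)) (ω : Ω) : ℝ :=
  (l.map fun p => p.1 * ind p.2 ω).sum

/-- `μ`-value of a formal combination -/
noncomputable def valL (μ : FA A) (l : List (ℝ × Set Ω)) : ℝ :=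
  (l.map fun p => p.1 * μ.m p.2).sum

@[simp] lemma fnL_nil (ω : Ω) : fnL ([] : List (ℝ × Set Ω)) ω = 0 := rfl

@[simp] lemma fnL_cons (p : ℝ × Set Ω) (l : List (ℝ × Set Ω)) (ω : Ω) :
    fnL (p :: l) ω = p.1 * ind p.2 ω + fnL l ω := by simp [fnL]

@[simp] lemma fnL_append (l l' : List (ℝ × Set Ω)) (ω : Ω) :
    fnL (l ++ l') ω = fnL l ω + fnL l' ω := by simp [fnL]

@[simp] lemma valL_nil (μ : FA A) : valL μ ([] : List (ℝ × Set Ω)) = 0 := rfl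

@[simp] lemma valL_cons (μ : FA A) (p : ℝ × Set Ω) (l : List (ℝ × Set Ω)) :
    valL μ (p :: l) = p.1 * μ.m p.2 + valL μ l := by simp [valL]

@[simp] lemma valL_append (μ : FA A) (l l' : List (ℝ × Set Ω)) :
    valL μ (l ++ l') = valL μ l + valL μ l' := by simp [valL]

/-- scaling a combination -/
lemma fnL_smul (c : ℝ) (l : List (ℝ × Set Ω)) (ω : Ω) :
    fnL (l.map fun p => (c * p.1, p.2)) ω = c * fnL l ω := by
  induction l with
  | nil => simp
  | cons p l ih => simp [fnL, List.map_map] at ih ⊢; ring_nf; ring_nf at ih; linarith [ih]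

lemma valL_smul (μ : FA A) (c : ℝ) (l : List (ℝ × Set Ω)) :
    valL μ (l.map fun p => (c * p.1, p.2)) = c * valL μ l := by
  induction l with
  | nil => simp
  | cons p l ih => simp [valL, List.map_map] at ih ⊢; ring_nf; ring_nf at ih; linarith [ih]

/-- if `ω ∈ T` and all sets in `m` are disjoint from `T` then `fnL m ω = 0`. -/
lemma fnL_eq_zero {m : List (ℝ × Set Ω)} {T : Set Ω} {ω : Ω}
    (hd : ∀ q ∈ m, Disjoint T q.2) (hω : ω ∈ T) : fnL m ω = 0 := by
  induction m with
  | nil => simp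
  | cons q m ih =>
    have h1 : ω ∉ q.2 := fun h => (hd q (by simp)).le_bot ⟨hω, h⟩
    rw [fnL_cons, ind_of_not_mem h1, ih fun r hr => hd r (by simp [hr])]
    ring

/-- the fundamental refinement step -/
noncomputable def refineL (c : ℝ) (E : Set Ω) : List (ℝ × Set Ω) → List (ℝ × Set Ω)
  | [] => [(c, E)]
  | (d, T) :: m => (d + c, T ∩ E) :: (d, T \ E) :: refineL c (E \ T) m

lemma refineL_sets {m : List (ℝ × Set Ω)} (hm : ∀ p ∈ m, p.2 ∈ A.sets)
    {c : ℝ} {E : Set Ω} (hE : E ∈ A.sets) : ∀ p ∈ refineL c E m, p.2 ∈ A.sets := by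
  induction m generalizing c E with
  | nil => intro p hp; simp [refineL] at hp; simp [hp, hE]
  | cons q m ih =>
    obtain ⟨d, T⟩ := q
    have hT : T ∈ A.sets := hm (d, T) (by simp)
    intro p hp
    simp only [refineL, List.mem_cons] at hp
    rcases hp with rfl | rfl | hp
    · exact A.inter_mem hT hE
    · exact A.diff_mem hT hE
    · exact ih (fun r hr => hm r (by simp [hr])) (A.diff_mem hE hT) p hp

lemma refineL_subset {m : List (ℝ × Set Ω)} {c : ℝ} {E : Set Ω} :
    ∀ p ∈ refineL c E m, p.2 ⊆ E ∪ ⋃ q ∈ m, q.2 := by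
  induction m generalizing c E with
  | nil => intro p hp; simp [refineL] at hp; simp [hp]
  | cons q m ih =>
    obtain ⟨d, T⟩ := q
    intro p hp
    simp only [refineL, List.mem_cons] at hp
    rcases hp with rfl | rfl | hp
    · intro ω hω; simp [hω.2]
    · intro ω hω; simp; right; left; exact hω.1
    · intro ω hω
      have := ih p hp hω
      rcases this with h | h
      · simp; left; exact h.1
      · simp at h ⊢; tauto

lemma refineL_pairwise {m : List (ℝ × Set Ω)}
    (hm : m.Pairwise fun p q => Disjoint p.2 q.2) {c : ℝ} {E : Set Ω} :
    (refineL c E m).Pairwise fun p q => Disjoint p.2 q.2 := by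
  induction m generalizing c E with
  | nil => simp [refineL]
  | cons q m ih =>
    obtain ⟨d, T⟩ := q
    rw [List.pairwise_cons] at hm
    obtain ⟨hdisj, hm'⟩ := hm
    simp only [refineL]
    refine List.Pairwise.cons ?_ (List.Pairwise.cons ?_ (ih hm'))
    · intro p hp
      simp only [List.mem_cons] at hp
      rcases hp with rfl | hp
      · exact Set.disjoint_left.2 fun ω h h' => h'.2 h.2
      · have hsub := refineL_subset p hp
        refine Set.disjoint_left.2 fun ω hω hω' => ?_
        rcases hsub hω' with h | h
        · exact h.2 hω.1
        · simp at h
          obtain ⟨a, b, hab, hωb⟩ := h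
          exact (hdisj (a, b) hab).le_bot ⟨hω.1, hωb⟩
    · intro p hp
      have hsub := refineL_subset p hp
      refine Set.disjoint_left.2 fun ω hω hω' => ?_
      rcases hsub hω' with h | h
      · exact h.2 hω.1
      · simp at h
        obtain ⟨a, b, hab, hωb⟩ := h
        exact (hdisj (a, b) hab).le_bot ⟨hω.1, hωb⟩

lemma refineL_fn {m : List (ℝ × Set Ω)} {c : ℝ} {E : Set Ω} (ω : Ω) :
    fnL (refineL c E m) ω = c * ind E ω + fnL m ω := by
  induction m generalizing c E with
  | nil => simp [refineL]
  | cons q m ih =>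
    obtain ⟨d, T⟩ := q
    simp only [refineL, fnL_cons, ih]
    by_cases hT : ω ∈ T <;> by_cases hE : ω ∈ E <;>
      simp [ind_of_mem, ind_of_not_mem, hT, hE, Set.mem_inter_iff, Set.mem_diff] <;> ring

lemma refineL_val (μ : FA A) {m : List (ℝ × Set Ω)} (hm : ∀ p ∈ m, p.2 ∈ A.sets)
    {c : ℝ} {E : Set Ω} (hE : E ∈ A.sets) :
    valL μ (refineL c E m) = c * μ.m E + valL μ m := by
  induction m generalizing c E with
  | nil => simp [refineL, valL]
  | cons q m ih =>
    obtain ⟨d, T⟩ := q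
    have hT : T ∈ A.sets := hm (d, T) (by simp)
    have h1 : μ.m (T ∩ E) + μ.m (T \ E) = μ.m T := by
      rw [← μ.add (T ∩ E) (A.inter_mem hT hE) (T \ E) (A.diff_mem hT hE)
        (by rw [Set.disjoint_iff]; intro ω hω; exact hω.2.2 hω.1.2),
        Set.inter_union_diff]
    have h2 : μ.m (T ∩ E) + μ.m (E \ T) = μ.m E := by
      rw [← μ.add (T ∩ E) (A.inter_mem hT hE) (E \ T) (A.diff_mem hE hT)
        (by rw [Set.disjoint_iff]; intro ω hω; exact hω.2.2 hω.1.1),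
        Set.inter_comm, Set.inter_union_diff]
    simp only [refineL, valL_cons, ih (fun r hr => hm r (by simp [hr])) (A.diff_mem hE hT)]
    linear_combination d * h1 + c * h2

/-- disjointification of a formal combination -/
noncomputable def disjL : List (ℝ × Set Ω) → List (ℝ × Set Ω)
  | [] => []
  | (c, E) :: l => refineL c E (disjL l)

lemma disjL_sets {l : List (ℝ × Set Ω)} (hl : ∀ p ∈ l, p.2 ∈ A.sets) :
    ∀ p ∈ disjL l, p.2 ∈ A.sets := by
  induction l with
  | nil => simp [disjL]
  | cons q l ih =>
    obtain ⟨c, E⟩ := q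
    exact refineL_sets (ih fun r hr => hl r (by simp [hr])) (hl (c, E) (by simp))

lemma disjL_pairwise (l : List (ℝ × Set Ω)) :
    (disjL l).Pairwise fun p q => Disjoint p.2 q.2 := by
  induction l with
  | nil => simp [disjL]
  | cons q l ih => obtain ⟨c, E⟩ := q; exact refineL_pairwise ih

lemma disjL_fn (l : List (ℝ × Set Ω)) (ω : Ω) : fnL (disjL l) ω = fnL l ω := by
  induction l with
  | nil => simp [disjL]
  | cons q l ih => obtain ⟨c, E⟩ := q; simp [disjL, refineL_fn, ih]

lemma disjL_val (μ : FA A) {l : List (ℝ × Set Ω)} (hl : ∀ p ∈ l, p.2 ∈ A.sets) :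
    valL μ (disjL l) = valL μ l := by
  induction l with
  | nil => simp [disjL]
  | cons q l ih =>
    obtain ⟨c, E⟩ := q
    rw [disjL, refineL_val μ (disjL_sets fun r hr => hl r (by simp [hr]))
      (hl (c, E) (by simp)), ih fun r hr => hl r (by simp [hr]), valL_cons]

/-- nonnegative combinations over a disjoint family have nonnegative value -/
lemma valL_nonneg_of_disjoint (μ : FA A) {m : List (ℝ × Set Ω)}
    (hsets : ∀ p ∈ m, p.2 ∈ A.sets)
    (hdisj : m.Pairwise fun p q => Disjoint p.2 q.2)
    (hpos : ∀ ω, 0 ≤ fnL m ω) : 0 ≤ valL μ m := by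
  induction m with
  | nil => simp
  | cons q m ih =>
    obtain ⟨c, T⟩ := q
    rw [List.pairwise_cons] at hdisj
    obtain ⟨hd, hm'⟩ := hdisj
    have htail : ∀ ω, 0 ≤ fnL m ω := by
      intro ω
      by_cases hω : ω ∈ T
      · rw [fnL_eq_zero hd hω]
      · have := hpos ω
        rw [fnL_cons, ind_of_not_mem hω] at this
        linarith
    have hT : T ∈ A.sets := hsets (c, T) (by simp)
    have hterm : 0 ≤ c * μ.m T := by
      by_cases hTe : T = ∅
      · subst hTe; rw [μ.empty]; ring_nf; exact le_refl 0
      · obtain ⟨ω, hω⟩ := Set.nonempty_iff_ne_empty.2 hTe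
        have hc : 0 ≤ c := by
          have := hpos ω
          rw [fnL_cons, ind_of_mem hω, fnL_eq_zero hd hω] at this
          linarith
        exact mul_nonneg hc (μ.nonneg T hT)
    rw [valL_cons]
    have := ih (fun r hr => hsets r (by simp [hr])) hm' htail
    linarith

/-- THE CORE LEMMA: a pointwise-nonnegative combination with sets in the algebra
has nonnegative `μ`-value. -/
lemma valL_nonneg (μ : FA A) {l : List (ℝ × Set Ω)} (hl : ∀ p ∈ l, p.2 ∈ A.sets)
    (hpos : ∀ ω, 0 ≤ fnL l ω) : 0 ≤ valL μ l := by
  rw [← disjL_val μ hl]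
  exact valL_nonneg_of_disjoint μ (disjL_sets hl) (disjL_pairwise l)
    (fun ω => by rw [disjL_fn]; exact hpos ω)

/-- level set `{fnL m > 1/2}` of a disjoint combination lies in the algebra -/
lemma levelSet_mem {m : List (ℝ × Set Ω)} (hsets : ∀ p ∈ m, p.2 ∈ A.sets)
    (hdisj : m.Pairwise fun p q => Disjoint p.2 q.2) :
    {ω | 1/2 < fnL m ω} ∈ A.sets := by
  induction m with
  | nil =>
    have h0 : {ω : Ω | 1/2 < fnL ([] : List (ℝ × Set Ω)) ω} = ∅ := by
      ext ω; simp [fnL]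
    rw [h0]; exact A.empty_mem
  | cons q m ih =>
    obtain ⟨d, T⟩ := q
    rw [List.pairwise_cons] at hdisj
    obtain ⟨hd, hm'⟩ := hdisj
    have hT : T ∈ A.sets := hsets (d, T) (by simp)
    have hS' : {ω | 1/2 < fnL m ω} ∈ A.sets := ih (fun r hr => hsets r (by simp [hr])) hm'
    have heq : {ω | 1/2 < fnL ((d, T) :: m) ω} =
        (if 1/2 < d then T else ∅) ∪ ({ω | 1/2 < fnL m ω} \ T) := by
      ext ω
      by_cases hω : ω ∈ T
      · simp only [Set.mem_setOf_eq, fnL_cons, ind_of_mem hω, fnL_eq_zero hd hω,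
          Set.mem_union, Set.mem_diff]
        split <;> simp_all <;> linarith
      · simp only [Set.mem_setOf_eq, fnL_cons, ind_of_not_mem hω, Set.mem_union,
          Set.mem_diff, hω]
        split <;> simp [hω] <;> ring_nf <;> tauto
    rw [heq]
    refine A.union_mem _ ?_ _ (A.diff_mem hS' hT)
    split
    · exact hT
    · exact A.empty_mem

end PlachkyLists

section PlachkyHB
variable {Ω : Type*}

/-- the submodule of bounded functions -/
def bddF (Ω : Type*) : Submodule ℝ (Ω → ℝ) where
  carrier := {f | ∃ M, ∀ ω, |f ω| ≤ M}
  add_mem' := by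
    rintro f g ⟨M, hM⟩ ⟨N, hN⟩
    exact ⟨M + N, fun ω => (abs_add_le _ _).trans (add_le_add (hM ω) (hN ω))⟩
  zero_mem' := ⟨0, by simp⟩
  smul_mem' := by
    rintro c f ⟨M, hM⟩
    refine ⟨|c| * M, fun ω => ?_⟩
    simp only [Pi.smul_apply, smul_eq_mul, abs_mul]
    have h0 : (0:ℝ) ≤ |c| := abs_nonneg c
    exact mul_le_mul_of_nonneg_left (hM ω) h0

variable (A₁ A₂ : SetAlgebra Ω) (Q : FA A₂)

/-- simple functions over `A₁` -/
def VOne : Set (Ω → ℝ) := {w | ∃ l : List (ℝ × Set Ω), (∀ p ∈ l, p.2 ∈ A₁.sets) ∧ w = fnL l}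

lemma VOne_zero : (0 : Ω → ℝ) ∈ VOne A₁ := ⟨[], by simp, funext fun ω => by simp⟩

lemma VOne_add {v w : Ω → ℝ} (hv : v ∈ VOne A₁) (hw : w ∈ VOne A₁) : v + w ∈ VOne A₁ := by
  obtain ⟨l, hl, rfl⟩ := hv
  obtain ⟨l', hl', rfl⟩ := hw
  refine ⟨l ++ l', ?_, funext fun ω => by simp⟩
  intro p hp
  rcases List.mem_append.1 hp with h | h
  exacts [hl p h, hl' p h]

lemma VOne_smul {v : Ω → ℝ} (c : ℝ) (hv : v ∈ VOne A₁) : c • v ∈ VOne A₁ := by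
  obtain ⟨l, hl, rfl⟩ := hv
  refine ⟨l.map fun p => (c * p.1, p.2), ?_, funext fun ω => by simp [fnL_smul]⟩
  intro p hp
  simp only [List.mem_map] at hp
  obtain ⟨q, hq, rfl⟩ := hp
  exact hl q hq

/-- the set of "upper values" defining the quotient sublinear functional -/
def NSet (x : bddF Ω) : Set ℝ :=
  {r | ∃ (v : Ω → ℝ) (l : List (ℝ × Set Ω)), v ∈ VOne A₁ ∧ (∀ p ∈ l, p.2 ∈ A₂.sets) ∧
    (∀ ω, |(x : Ω → ℝ) ω + v ω| ≤ fnL l ω) ∧ r = valL Q l}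

lemma NSet_nonneg {x : bddF Ω} {r : ℝ} (hr : r ∈ NSet A₁ A₂ Q x) : 0 ≤ r := by
  obtain ⟨v, l, _, hl, hle, rfl⟩ := hr
  exact valL_nonneg Q hl fun ω => le_trans (abs_nonneg _) (hle ω)

lemma NSet_bddBelow (x : bddF Ω) : BddBelow (NSet A₁ A₂ Q x) :=
  ⟨0, fun r hr => NSet_nonneg A₁ A₂ Q hr⟩

lemma NSet_nonempty (x : bddF Ω) : (NSet A₁ A₂ Q x).Nonempty := by
  obtain ⟨M, hM⟩ := x.2
  refine ⟨valL Q [(max M 0, Set.univ)], 0, [(max M 0, Set.univ)], VOne_zero A₁, ?_, ?_, rfl⟩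
  · intro p hp; simp at hp; simp [hp, A₂.univ_mem]
  · intro ω
    have h1 : fnL [(max M 0, (Set.univ : Set Ω))] ω = max M 0 := by
      simp [fnL, ind_of_mem (Set.mem_univ ω)]
    rw [h1]
    simpa using le_trans (hM ω) (le_max_left M 0)

/-- pre-membership is stable under positive scaling -/
lemma NSet_smul {x : bddF Ω} {r : ℝ} (c : ℝ) (hc : 0 < c) (hr : r ∈ NSet A₁ A₂ Q x) :
    c * r ∈ NSet A₁ A₂ Q (c • x) := by
  obtain ⟨v, l, hv, hl, hle, rfl⟩ := hr
  refine ⟨c • v, l.map fun p => (c * p.1, p.2), VOne_smul A₁ c hv, ?_, ?_, ?_⟩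
  · intro p hp
    simp only [List.mem_map] at hp
    obtain ⟨q, hq, rfl⟩ := hp
    exact hl q hq
  · intro ω
    rw [fnL_smul]
    have h1 : |((c • x : bddF Ω) : Ω → ℝ) ω + (c • v) ω| = c * |(x : Ω → ℝ) ω + v ω| := by
      simp only [Submodule.coe_smul, Pi.smul_apply, smul_eq_mul]
      rw [← mul_add, abs_mul, abs_of_pos hc]
    rw [h1]
    exact mul_le_mul_of_nonneg_left (hle ω) hc.le
  · rw [valL_smul]

lemma NSet_add {x y : bddF Ω} {r s : ℝ} (hr : r ∈ NSet A₁ A₂ Q x)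
    (hs : s ∈ NSet A₁ A₂ Q y) : r + s ∈ NSet A₁ A₂ Q (x + y) := by
  obtain ⟨v, l, hv, hl, hle, rfl⟩ := hr
  obtain ⟨w, l', hw, hl', hle', rfl⟩ := hs
  refine ⟨v + w, l ++ l', VOne_add A₁ hv hw, ?_, ?_, by simp⟩
  · intro p hp
    rcases List.mem_append.1 hp with h | h
    exacts [hl p h, hl' p h]
  · intro ω
    rw [fnL_append]
    calc |((x + y : bddF Ω) : Ω → ℝ) ω + (v + w) ω|
        = |((x : Ω → ℝ) ω + v ω) + ((y : Ω → ℝ) ω + w ω)| := by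
          simp only [Submodule.coe_add, Pi.add_apply]; ring_nf
      _ ≤ |(x : Ω → ℝ) ω + v ω| + |(y : Ω → ℝ) ω + w ω| := abs_add_le _ _
      _ ≤ fnL l ω + fnL l' ω := add_le_add (hle ω) (hle' ω)

/-- the sublinear functional -/
noncomputable def Nfun (x : bddF Ω) : ℝ := sInf (NSet A₁ A₂ Q x)

lemma Nfun_nonneg (x : bddF Ω) : 0 ≤ Nfun A₁ A₂ Q x :=
  le_csInf (NSet_nonempty A₁ A₂ Q x) fun r hr => NSet_nonneg A₁ A₂ Q hr

lemma Nfun_hom (c : ℝ) (hc : 0 < c) (x : bddF Ω) :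
    Nfun A₁ A₂ Q (c • x) = c * Nfun A₁ A₂ Q x := by
  apply le_antisymm
  · have h : ∀ r ∈ NSet A₁ A₂ Q x, Nfun A₁ A₂ Q (c • x) ≤ c * r := fun r hr =>
      csInf_le (NSet_bddBelow A₁ A₂ Q _) (NSet_smul A₁ A₂ Q c hc hr)
    have h2 : Nfun A₁ A₂ Q (c • x) / c ≤ Nfun A₁ A₂ Q x :=
      le_csInf (NSet_nonempty A₁ A₂ Q x) fun r hr => (div_le_iff₀' hc).2 (h r hr)
    calc Nfun A₁ A₂ Q (c • x) = c * (Nfun A₁ A₂ Q (c • x) / c) := by field_simp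
      _ ≤ c * Nfun A₁ A₂ Q x := mul_le_mul_of_nonneg_left h2 hc.le
  · have h : ∀ r ∈ NSet A₁ A₂ Q (c • x), Nfun A₁ A₂ Q x ≤ c⁻¹ * r := by
      intro r hr
      have := NSet_smul A₁ A₂ Q c⁻¹ (by positivity) hr
      rw [smul_smul, inv_mul_cancel₀ hc.ne', one_smul] at this
      exact csInf_le (NSet_bddBelow A₁ A₂ Q x) this
    refine le_csInf (NSet_nonempty A₁ A₂ Q _) fun r hr => ?_
    have := h r hr
    calc c * Nfun A₁ A₂ Q x ≤ c * (c⁻¹ * r) := mul_le_mul_of_nonneg_left this hc.le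
      _ = r := by field_simp

lemma Nfun_add (x y : bddF Ω) :
    Nfun A₁ A₂ Q (x + y) ≤ Nfun A₁ A₂ Q x + Nfun A₁ A₂ Q y := by
  have h1 : ∀ s ∈ NSet A₁ A₂ Q y, Nfun A₁ A₂ Q (x + y) - s ≤ Nfun A₁ A₂ Q x := by
    intro s hs
    refine le_csInf (NSet_nonempty A₁ A₂ Q x) fun r hr => ?_
    have := csInf_le (NSet_bddBelow A₁ A₂ Q _) (NSet_add A₁ A₂ Q hr hs)
    have h : Nfun A₁ A₂ Q (x + y) ≤ r + s := this
    linarith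
  have h2 : Nfun A₁ A₂ Q (x + y) - Nfun A₁ A₂ Q x ≤ Nfun A₁ A₂ Q y :=
    le_csInf (NSet_nonempty A₁ A₂ Q y) fun s hs => by linarith [h1 s hs]
  linarith

end PlachkyHB

section PlachkyForward
variable {Ω : Type*}

lemma plachky_separation (A₁ A₂ : SetAlgebra Ω) (hsub : A₁.sets ⊆ A₂.sets) (Q : FA A₂)
    {ε : ℝ} {B : Set Ω} (hB : B ∈ A₂.sets)
    (hfar : ∀ S ∈ A₁.sets, ε ≤ Q.m (symmDiff B S))
    (xB : bddF Ω) (hxB : (xB : Ω → ℝ) = ind B)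
    {c : ℝ} (hc : 0 < c) {r : ℝ} (hr : r ∈ NSet A₁ A₂ Q (c • xB)) :
    c * (ε / 2) ≤ r := by
  obtain ⟨v, l, hv, hl, hle, rfl⟩ := hr
  obtain ⟨l₀, hl₀, rfl⟩ := hv
  set l₀' : List (ℝ × Set Ω) := l₀.map fun p => (-c⁻¹ * p.1, p.2) with hl₀'def
  have hl₀'sets : ∀ p ∈ l₀', p.2 ∈ A₁.sets := by
    intro p hp
    simp only [hl₀'def, List.mem_map] at hp
    obtain ⟨q, hq, rfl⟩ := hp
    exact hl₀ q hq
  set S : Set Ω := {ω | 1/2 < fnL (disjL l₀') ω} with hSdef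
  have hS : S ∈ A₁.sets := levelSet_mem (disjL_sets hl₀'sets) (disjL_pairwise l₀')
  have hw : ∀ ω, fnL (disjL l₀') ω = -c⁻¹ * fnL l₀ ω := by
    intro ω; rw [disjL_fn, hl₀'def, fnL_smul]
  -- pointwise key inequality
  have key : ∀ ω, c / 2 * ind (symmDiff B S) ω ≤ fnL l ω := by
    intro ω
    have h0 := hle ω
    have h0' : |c * ind B ω + fnL l₀ ω| ≤ fnL l ω := by
      have hco : ((c • xB : bddF Ω) : Ω → ℝ) ω = c * ind B ω := by
        rw [Submodule.coe_smul, hxB]; simp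
      rwa [hco] at h0
    by_cases hmem : ω ∈ symmDiff B S
    · rw [ind_of_mem hmem]
      rw [Set.mem_symmDiff] at hmem
      rcases hmem with ⟨hωB, hωS⟩ | ⟨hωS, hωB⟩
      · -- ω ∈ B, ω ∉ S : fnL (disjL l₀') ω ≤ 1/2
        have h1 : fnL (disjL l₀') ω ≤ 1/2 := by
          by_contra h
          exact hωS (by exact lt_of_not_ge h)
        rw [hw ω] at h1
        rw [ind_of_mem hωB] at h0'
        -- -c⁻¹ * fnL l₀ ω ≤ 1/2, so fnL l₀ ω ≥ -c/2
        have h2 : -(c/2) ≤ fnL l₀ ω := by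
          have h3 := mul_le_mul_of_nonneg_left h1 hc.le
          have h4 : c * (-c⁻¹ * fnL l₀ ω) = -fnL l₀ ω := by
            rw [neg_mul, mul_neg, ← mul_assoc, mul_inv_cancel₀ hc.ne', one_mul]
          rw [h4] at h3
          linarith
        have h3 : c / 2 ≤ c * 1 + fnL l₀ ω := by linarith
        calc c / 2 * 1 = c / 2 := by ring
          _ ≤ c * 1 + fnL l₀ ω := h3
          _ ≤ |c * 1 + fnL l₀ ω| := le_abs_self _
          _ ≤ fnL l ω := h0'
      · -- ω ∈ S, ω ∉ B : fnL (disjL l₀') ω > 1/2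
        have h1 : 1/2 < fnL (disjL l₀') ω := hωS
        rw [hw ω] at h1
        rw [ind_of_not_mem hωB] at h0'
        have h2 : fnL l₀ ω ≤ -(c/2) := by
          have h3 := mul_le_mul_of_nonneg_left h1.le hc.le
          have h4 : c * (-c⁻¹ * fnL l₀ ω) = -fnL l₀ ω := by
            rw [neg_mul, mul_neg, ← mul_assoc, mul_inv_cancel₀ hc.ne', one_mul]
          rw [h4] at h3
          linarith
        calc c / 2 * 1 = c / 2 := by ring
          _ ≤ -(c * 0 + fnL l₀ ω) := by linarith
          _ ≤ |c * 0 + fnL l₀ ω| := neg_le_abs _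
          _ ≤ fnL l ω := h0'
    · rw [ind_of_not_mem hmem]
      have : (0:ℝ) ≤ fnL l ω := le_trans (abs_nonneg _) h0'
      linarith
  -- apply the core lemma
  have hcore := valL_nonneg Q (l := l ++ [(-(c/2), symmDiff B S)]) ?_ ?_
  · rw [valL_append] at hcore
    have hval : valL Q [(-(c/2), symmDiff B S)] = -(c/2) * Q.m (symmDiff B S) := by
      simp [valL]
    rw [hval] at hcore
    have hfarS := hfar S hS
    have hQpos : 0 ≤ Q.m (symmDiff B S) := Q.nonneg _ (A₂.symmDiff_mem hB (hsub hS))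
    nlinarith
  · intro p hp
    rcases List.mem_append.1 hp with h | h
    · exact hl p h
    · rw [List.mem_singleton] at h
      subst h
      exact A₂.symmDiff_mem hB (hsub hS)
  · intro ω
    rw [fnL_append]
    have : fnL [(-(c/2), symmDiff B S)] ω = -(c/2) * ind (symmDiff B S) ω := by
      simp [fnL]
    rw [this]
    have := key ω
    linarith

end PlachkyForward

section PlachkyMain
variable {Ω : Type*}

/-- an indicator as an element of the bounded functions -/
noncomputable def indBdd (E : Set Ω) : bddF Ω :=
  ⟨ind E, 1, fun ω => by
    rw [abs_of_nonneg (ind_nonneg _ _)]; exact ind_le_one _ _⟩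

@[simp] lemma indBdd_coe (E : Set Ω) : ((indBdd E : bddF Ω) : Ω → ℝ) = ind E := rfl

lemma plachky_forward (A₁ A₂ : SetAlgebra Ω) (hsub : A₁.sets ⊆ A₂.sets)
    (P : FA A₁) (Q : FA A₂) (hQP : ∀ S ∈ A₁.sets, Q.m S = P.m S)
    (hext : ∀ Q₁ Q₂ : FA A₂,
        (∀ S ∈ A₁.sets, Q₁.m S = P.m S) → (∀ S ∈ A₁.sets, Q₂.m S = P.m S) →
        ∀ α : ℝ, 0 < α → α < 1 →
          (∀ B ∈ A₂.sets, Q.m B = α * Q₁.m B + (1 - α) * Q₂.m B) →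
          ∀ B ∈ A₂.sets, Q₁.m B = Q.m B ∧ Q₂.m B = Q.m B) :
    ∀ ε > (0:ℝ), ∀ B ∈ A₂.sets, ∃ S ∈ A₁.sets, Q.m (symmDiff B S) < ε := by
  by_contra hcon
  push_neg at hcon
  obtain ⟨ε, hε, B, hB, hfar⟩ := hcon
  -- B is nonempty
  have hBne : B.Nonempty := by
    rw [Set.nonempty_iff_ne_empty]
    intro h
    have h1 := hfar ∅ A₁.empty_mem
    rw [h] at h1
    simp only [symmDiff_self] at h1
    have h2 : Q.m (⊥ : Set Ω) = 0 := Q.empty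
    rw [h2] at h1
    linarith
  set xB : bddF Ω := indBdd B with hxBdef
  have hxB0 : xB ≠ 0 := by
    obtain ⟨ω, hω⟩ := hBne
    intro h
    have h1 : ((xB : bddF Ω) : Ω → ℝ) ω = 0 := by rw [h]; rfl
    rw [hxBdef, indBdd_coe, ind_of_mem hω] at h1
    norm_num at h1
  set Λ := LinearPMap.mkSpanSingleton (K := ℝ) (σ := RingHom.id ℝ) xB (ε / 2) hxB0 with hΛdef
  have hf : ∀ x : Λ.domain, Λ x ≤ Nfun A₁ A₂ Q x := by
    intro x
    have hx : (x : bddF Ω) ∈ (Submodule.span ℝ {xB}) := x.2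
    obtain ⟨cc, hcc⟩ := Submodule.mem_span_singleton.1 hx
    have hmem : cc • xB ∈ Λ.domain := by
      rw [hcc]; exact x.2
    have hxeq : x = ⟨cc • xB, hmem⟩ := Subtype.ext hcc.symm
    rw [hxeq, LinearPMap.mkSpanSingleton'_apply]
    rcases le_or_gt cc 0 with h | h
    · have h1 : cc • (ε / 2) ≤ 0 := by
        rw [smul_eq_mul]; nlinarith
      exact h1.trans (Nfun_nonneg A₁ A₂ Q _)
    · refine le_csInf (NSet_nonempty _ _ _ _) fun r hr => ?_
      rw [smul_eq_mul]
      exact plachky_separation A₁ A₂ hsub Q hB hfar xB rfl h hr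
  obtain ⟨g, hg1, hg2⟩ := exists_extension_of_le_sublinear Λ (Nfun A₁ A₂ Q)
    (fun c hc x => Nfun_hom A₁ A₂ Q c hc x) (Nfun_add A₁ A₂ Q) hf
  -- g of the distinguished indicator
  have hgxB : g xB = ε / 2 := by
    have hmem : xB ∈ Λ.domain := Submodule.mem_span_singleton_self xB
    have h1 := hg1 ⟨xB, hmem⟩
    have h2 : Λ ⟨xB, hmem⟩ = ε / 2 := LinearPMap.mkSpanSingleton'_apply_self _ _ _ _
    rw [h2] at h1
    exact h1
  -- the perturbation
  set μ : Set Ω → ℝ := fun E => g (indBdd E) with hμdef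
  have hμadd : ∀ E F : Set Ω, Disjoint E F → μ (E ∪ F) = μ E + μ F := by
    intro E F hEF
    have h1 : indBdd (E ∪ F) = indBdd E + indBdd F := by
      apply Subtype.ext
      funext ω
      show ind (E ∪ F) ω = ind E ω + ind F ω
      by_cases hE : ω ∈ E
      · have hF : ω ∉ F := fun h => hEF.le_bot ⟨hE, h⟩
        rw [ind_of_mem (Set.mem_union_left _ hE), ind_of_mem hE, ind_of_not_mem hF]; ring
      · by_cases hF : ω ∈ F
        · rw [ind_of_mem (Set.mem_union_right _ hF), ind_of_not_mem hE, ind_of_mem hF]; ring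
        · rw [ind_of_not_mem (fun h => h.elim hE hF), ind_of_not_mem hE, ind_of_not_mem hF]; ring
    show g (indBdd (E ∪ F)) = g (indBdd E) + g (indBdd F)
    rw [h1, map_add]
  have hμbound : ∀ E ∈ A₂.sets, |μ E| ≤ Q.m E := by
    intro E hE
    have hmem1 : Q.m E ∈ NSet A₁ A₂ Q (indBdd E) := by
      refine ⟨0, [(1, E)], VOne_zero A₁, by simp [hE], fun ω => ?_, by simp [valL]⟩
      have : fnL [((1:ℝ), E)] ω = ind E ω := by simp [fnL]
      rw [this]
      simp [abs_of_nonneg (ind_nonneg E ω)]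
    have hmem2 : Q.m E ∈ NSet A₁ A₂ Q (-(indBdd E)) := by
      refine ⟨0, [(1, E)], VOne_zero A₁, by simp [hE], fun ω => ?_, by simp [valL]⟩
      have h1 : fnL [((1:ℝ), E)] ω = ind E ω := by simp [fnL]
      have h2 : ((-(indBdd E) : bddF Ω) : Ω → ℝ) ω = -(ind E ω) := rfl
      rw [h1, h2]
      simp [abs_of_nonneg (ind_nonneg E ω)]
    have h1 : μ E ≤ Q.m E :=
      le_trans (hg2 (indBdd E)) (csInf_le (NSet_bddBelow _ _ _ _) hmem1)
    have h2 : -(μ E) ≤ Q.m E := by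
      have := le_trans (hg2 (-(indBdd E))) (csInf_le (NSet_bddBelow _ _ _ _) hmem2)
      rwa [map_neg] at this
    rw [abs_le]; constructor <;> linarith
  have hμvanish : ∀ S ∈ A₁.sets, μ S = 0 := by
    intro S hS
    have hv1 : (fun ω => -(ind S ω)) ∈ VOne A₁ := by
      refine ⟨[(-1, S)], by simp [hS], funext fun ω => ?_⟩
      simp [fnL]
    have hv2 : (fun ω => ind S ω) ∈ VOne A₁ := by
      refine ⟨[(1, S)], by simp [hS], funext fun ω => ?_⟩
      simp [fnL]
    have hmem1 : (0:ℝ) ∈ NSet A₁ A₂ Q (indBdd S) := by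
      refine ⟨_, [], hv1, by simp, fun ω => ?_, by simp [valL]⟩
      show |ind S ω + -(ind S ω)| ≤ fnL [] ω
      simp
    have hmem2 : (0:ℝ) ∈ NSet A₁ A₂ Q (-(indBdd S)) := by
      refine ⟨_, [], hv2, by simp, fun ω => ?_, by simp [valL]⟩
      show |(-(ind S ω)) + ind S ω| ≤ fnL [] ω
      simp
    have h1 : μ S ≤ 0 :=
      le_trans (hg2 (indBdd S)) (csInf_le (NSet_bddBelow _ _ _ _) hmem1)
    have h2 : -(μ S) ≤ 0 := by
      have := le_trans (hg2 (-(indBdd S))) (csInf_le (NSet_bddBelow _ _ _ _) hmem2)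
      rwa [map_neg] at this
    linarith
  -- build the two extensions
  let Q₁ : FA A₂ :=
    { m := fun E => Q.m E + μ E
      nonneg := fun E hE => by
        have := hμbound E hE
        rw [abs_le] at this
        show (0:ℝ) ≤ Q.m E + μ E
        linarith [this.1]
      total := by
        show Q.m Set.univ + μ Set.univ = 1
        rw [Q.total, hμvanish _ A₁.univ_mem]; ring
      add := fun S hS T hT hST => by
        show Q.m (S ∪ T) + μ (S ∪ T) = (Q.m S + μ S) + (Q.m T + μ T)
        rw [Q.add S hS T hT hST, hμadd S T hST]; ring }
  let Q₂ : FA A₂ :=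
    { m := fun E => Q.m E - μ E
      nonneg := fun E hE => by
        have := hμbound E hE
        rw [abs_le] at this
        show (0:ℝ) ≤ Q.m E - μ E
        linarith [this.2]
      total := by
        show Q.m Set.univ - μ Set.univ = 1
        rw [Q.total, hμvanish _ A₁.univ_mem]; ring
      add := fun S hS T hT hST => by
        show Q.m (S ∪ T) - μ (S ∪ T) = (Q.m S - μ S) + (Q.m T - μ T)
        rw [Q.add S hS T hT hST, hμadd S T hST]; ring }
  have hQ₁P : ∀ S ∈ A₁.sets, Q₁.m S = P.m S := by
    intro S hS
    show Q.m S + μ S = P.m S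
    rw [hμvanish S hS, hQP S hS]; ring
  have hQ₂P : ∀ S ∈ A₁.sets, Q₂.m S = P.m S := by
    intro S hS
    show Q.m S - μ S = P.m S
    rw [hμvanish S hS, hQP S hS]; ring
  have hconv : ∀ B' ∈ A₂.sets, Q.m B' = (1/2) * Q₁.m B' + (1 - 1/2) * Q₂.m B' := by
    intro B' _
    show Q.m B' = (1/2) * (Q.m B' + μ B') + (1 - 1/2) * (Q.m B' - μ B')
    ring
  obtain ⟨h1, _⟩ := hext Q₁ Q₂ hQ₁P hQ₂P (1/2) (by norm_num) (by norm_num) hconv B hB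
  have h2 : Q.m B + μ B = Q.m B := h1
  have h3 : μ B = ε / 2 := hgxB
  linarith

end PlachkyMain

/-- Plachky's theorem: an extension `Q` of `P` from `A₁` to `A₂` is an
extreme point of the set of all such extensions iff every `A₂`-set can be approximated
in `Q`-measure by `A₁`-sets. -/
theorem plachky {Ω : Type*} (A₁ A₂ : SetAlgebra Ω) (hsub : A₁.sets ⊆ A₂.sets)
    (P : FA A₁) (Q : FA A₂) (hQP : ∀ S ∈ A₁.sets, Q.m S = P.m S) :
    (∀ Q₁ Q₂ : FA A₂,
        (∀ S ∈ A₁.sets, Q₁.m S = P.m S) → (∀ S ∈ A₁.sets, Q₂.m S = P.m S) →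
        ∀ α : ℝ, 0 < α → α < 1 →
          (∀ B ∈ A₂.sets, Q.m B = α * Q₁.m B + (1 - α) * Q₂.m B) →
          ∀ B ∈ A₂.sets, Q₁.m B = Q.m B ∧ Q₂.m B = Q.m B)
    ↔ (∀ ε > (0:ℝ), ∀ B ∈ A₂.sets, ∃ S ∈ A₁.sets, Q.m (symmDiff B S) < ε) := by
  constructor
  · intro hext
    exact plachky_forward A₁ A₂ hsub P Q hQP hext
  · intro happrox Q₁ Q₂ hQ₁P hQ₂P α hα0 hα1 hconv B hB
    have key : ∀ (R : FA A₂) (β : ℝ), 0 < β → (∀ S ∈ A₁.sets, R.m S = P.m S) →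
        (∀ E ∈ A₂.sets, β * R.m E ≤ Q.m E) → R.m B = Q.m B := by
      intro R β hβ hRP hdom
      have habs : ∀ δ > (0:ℝ), |R.m B - Q.m B| ≤ (1/β + 1) * δ := by
        intro δ hδ
        obtain ⟨S, hS, hQBS⟩ := happrox δ hδ B hB
        have hSB₂ : symmDiff B S ∈ A₂.sets := A₂.symmDiff_mem hB (hsub hS)
        have h1 : |R.m B - R.m S| ≤ R.m (symmDiff B S) := R.abs_sub_le hB (hsub hS)
        have h2 : |Q.m B - Q.m S| ≤ Q.m (symmDiff B S) := Q.abs_sub_le hB (hsub hS)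
        have h3 : R.m (symmDiff B S) ≤ Q.m (symmDiff B S) / β := by
          have := hdom _ hSB₂
          rw [le_div_iff₀ hβ]
          linarith
        have h4 : R.m S = Q.m S := by rw [hRP S hS, hQP S hS]
        have hQpos : 0 ≤ Q.m (symmDiff B S) := Q.nonneg _ hSB₂
        calc |R.m B - Q.m B| = |(R.m B - R.m S) + (Q.m S - Q.m B)| := by
              rw [h4]; ring_nf
          _ ≤ |R.m B - R.m S| + |Q.m S - Q.m B| := abs_add_le _ _
          _ ≤ R.m (symmDiff B S) + Q.m (symmDiff B S) := by
              rw [abs_sub_comm] at h2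
              exact add_le_add h1 h2
          _ ≤ Q.m (symmDiff B S) / β + Q.m (symmDiff B S) := by linarith
          _ ≤ (1/β + 1) * δ := by
              have hle : Q.m (symmDiff B S) ≤ δ := hQBS.le
              have hd : Q.m (symmDiff B S) / β ≤ δ / β := by gcongr
              have hδβ : δ / β = (1/β) * δ := by ring
              nlinarith
      by_contra hne
      have habs0 : 0 < |R.m B - Q.m B| := abs_pos.2 (sub_ne_zero.2 hne)
      have hC : (0:ℝ) < 1/β + 1 := by positivity
      have hfin := habs (|R.m B - Q.m B| / (2 * (1/β + 1))) (by positivity)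
      have : (1/β + 1) * (|R.m B - Q.m B| / (2 * (1/β + 1))) = |R.m B - Q.m B| / 2 := by
        field_simp
      rw [this] at hfin
      linarith
    have hdom1 : ∀ E ∈ A₂.sets, α * Q₁.m E ≤ Q.m E := by
      intro E hE
      have hc := hconv E hE
      have h2 : 0 ≤ Q₂.m E := Q₂.nonneg E hE
      have h3 : 0 ≤ (1 - α) * Q₂.m E := mul_nonneg (by linarith) h2
      linarith
    have hdom2 : ∀ E ∈ A₂.sets, (1 - α) * Q₂.m E ≤ Q.m E := by
      intro E hE
      have hc := hconv E hE
      have h2 : 0 ≤ Q₁.m E := Q₁.nonneg E hE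
      have h3 : 0 ≤ α * Q₁.m E := mul_nonneg hα0.le h2
      linarith
    exact ⟨key Q₁ α hα0 hQ₁P hdom1, key Q₂ (1 - α) (by linarith) hQ₂P hdom2⟩
end

section
/- Let Ω = {0,1}^∞, let F be the algebra generated by cylinders, and let P, Q be finitely additive probabilities on (Ω, Σ). If the restriction Q_F is absolutely continuous with respect to P_F (meaning P(F_n) → 0 implies Q(F_n) → 0 for sequences F_n ∈ F), then the σ-additive Carathéodory extensions Q_σ and P_σ of Q_F and P_F to the Borel σ-algebra satisfy Q_σ ≪ P_σ. -/
open Filter Topology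


section Aux
open MeasureTheory MeasurableSpace Set

/-- `S` is determined by the first `t` coordinates. -/
def DetBy (t : ℕ) (S : Set BinSeq) : Prop :=
  ∀ ω ∈ S, ∀ ω' : BinSeq, (∀ i < t, ω' i = ω i) → ω' ∈ S

lemma inCylAlg_iff_detBy {S : Set BinSeq} : InCylAlg S ↔ ∃ t, DetBy t S := by
  classical
  constructor
  · rintro ⟨n, f, rfl⟩
    refine ⟨Finset.univ.sup (fun i => (f i).2), ?_⟩
    rintro ω hω ω' hagree
    simp only [Set.mem_iUnion] at hω ⊢
    obtain ⟨i, hi⟩ := hω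
    refine ⟨i, fun j hj => ?_⟩
    rw [hagree j (lt_of_lt_of_le hj (Finset.le_sup (f := fun i => (f i).2) (Finset.mem_univ i)))]
    exact hi j hj
  · rintro ⟨t, ht⟩
    set g : (Fin t → Bool) → BinSeq := fun v i => if h : i < t then v ⟨i, h⟩ else false with hg
    set s : Finset (Fin t → Bool) := Finset.univ.filter (fun v => g v ∈ S) with hs
    refine ⟨s.card, fun i => (g (s.equivFin.symm i).1, t), ?_⟩
    ext ω
    simp only [Set.mem_iUnion]
    constructor
    · intro hω
      set v : Fin t → Bool := fun j => ω j with hv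
      have hgv : ∀ i < t, g v i = ω i := fun i hi => by simp [hg, hv, hi]
      have hvS : g v ∈ S := ht ω hω _ hgv
      have hvs : v ∈ s := by simp [hs, hvS]
      refine ⟨s.equivFin ⟨v, hvs⟩, fun i hi => ?_⟩
      rw [Equiv.symm_apply_apply]
      exact (hgv i hi).symm
    · rintro ⟨i, hi⟩
      have hvS : g (s.equivFin.symm i).1 ∈ S :=
        (Finset.mem_filter.1 (s.equivFin.symm i).2).2
      exact ht _ hvS ω hi

lemma inCylAlg_isSetAlgebra : IsSetAlgebra {S : Set BinSeq | InCylAlg S} where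
  empty_mem := inCylAlg_iff_detBy.2 ⟨0, fun ω hω => hω.elim⟩
  compl_mem := by
    rintro S hS
    obtain ⟨t, ht⟩ := inCylAlg_iff_detBy.1 hS
    refine inCylAlg_iff_detBy.2 ⟨t, fun ω hω ω' hagree hmem => ?_⟩
    exact hω (ht ω' hmem ω fun i hi => (hagree i hi).symm)
  union_mem := by
    rintro S T hS hT
    obtain ⟨t1, h1⟩ := inCylAlg_iff_detBy.1 hS
    obtain ⟨t2, h2⟩ := inCylAlg_iff_detBy.1 hT
    refine inCylAlg_iff_detBy.2 ⟨max t1 t2, ?_⟩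
    rintro ω (hω | hω) ω' hagree
    · exact Or.inl (h1 ω hω ω' fun i hi => hagree i (lt_of_lt_of_le hi (le_max_left _ _)))
    · exact Or.inr (h2 ω hω ω' fun i hi => hagree i (lt_of_lt_of_le hi (le_max_right _ _)))

lemma measurableSet_cyl (ω : BinSeq) (t : ℕ) : MeasurableSet (cyl ω t) := by
  have : cyl ω t = ⋂ i ∈ Finset.range t, (fun ω' : BinSeq => ω' i) ⁻¹' {ω i} := by
    ext ω'; simp [cyl]
  rw [this]
  exact MeasurableSet.biInter (Finset.range t).countable_toSet
    (fun i _ => (measurable_pi_apply i) (by trivial))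

lemma binSeq_generateFrom :
    (inferInstance : MeasurableSpace BinSeq) = generateFrom {S | InCylAlg S} := by
  refine le_antisymm ?_ (generateFrom_le ?_)
  · have : (inferInstance : MeasurableSpace BinSeq)
        = ⨆ i : ℕ, MeasurableSpace.comap (fun ω : BinSeq => ω i) ⊤ := rfl
    rw [this]
    refine iSup_le fun i => ?_
    rw [← measurable_iff_comap_le]
    intro s' _
    refine measurableSet_generateFrom (inCylAlg_iff_detBy.2 ⟨i + 1, ?_⟩)
    intro ω hω ω' hagree
    simp only [Set.mem_preimage] at hω ⊢
    rw [hagree i (Nat.lt_succ_self i)]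
    exact hω
  · rintro S ⟨n, f, rfl⟩
    exact MeasurableSet.iUnion fun i => measurableSet_cyl _ _

end Aux

open MeasureTheory in
/-- Lemma 1: if `Q_F ≪ P_F` on the cylinder algebra, then the σ-additive
(Carathéodory) extensions of the restrictions to the Borel σ-algebra satisfy
`Q_σ ≪ P_σ`.  The extensions are characterized as the σ-additive probability measures
agreeing with `P` (resp. `Q`) on the cylinder algebra. -/
theorem absCont_of_restrictions_absCont
    (A : SetAlgebra BinSeq) (hσ : A.IsSigmaAlgebra)
    (hcyl : ∀ (ω : BinSeq) (t : ℕ), cyl ω t ∈ A.sets)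
    (P Q : FA A)
    (Pσ Qσ : Measure BinSeq) [IsProbabilityMeasure Pσ] [IsProbabilityMeasure Qσ]
    (hPσ : ∀ S, InCylAlg S → Pσ S = ENNReal.ofReal (P.m S))
    (hQσ : ∀ S, InCylAlg S → Qσ S = ENNReal.ofReal (Q.m S))
    (hac : ∀ F : ℕ → Set BinSeq, (∀ n, InCylAlg (F n)) →
      Tendsto (fun n => P.m (F n)) atTop (𝓝 0) →
      Tendsto (fun n => Q.m (F n)) atTop (𝓝 0)) :
    Qσ ≪ Pσ := by

  classical
  have hmemA : ∀ S, InCylAlg S → S ∈ A.sets := by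
    have hempty : (∅ : Set BinSeq) ∈ A.sets := by
      have := A.compl_mem _ A.univ_mem; simpa using this
    have hfin : ∀ n (g : Fin n → Set BinSeq), (∀ i, g i ∈ A.sets) → (⋃ i, g i) ∈ A.sets := by
      intro n
      induction n with
      | zero => intro g _; simpa using hempty
      | succ n ih =>
        intro g hg
        have hU : (⋃ i, g i) = g 0 ∪ ⋃ i : Fin n, g i.succ := by
          ext x; simp [Set.mem_iUnion, Fin.exists_fin_succ, Set.mem_union]
        rw [hU]
        exact A.union_mem _ (hg 0) _ (ih _ fun i => hg i.succ)
    rintro S ⟨n, f, rfl⟩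
    exact hfin n _ fun i => hcyl _ _
  -- ε-δ continuity on the algebra
  have hed : ∀ ε : ℝ, 0 < ε → ∃ δ : ℝ, 0 < δ ∧ ∀ S, InCylAlg S → P.m S < δ → Q.m S ≤ ε := by
    intro ε hε
    by_contra h
    push_neg at h
    choose F hF1 hF2 hF3 using fun n : ℕ => h (1 / ((n : ℝ) + 1)) (by positivity)
    have hP : Tendsto (fun n => P.m (F n)) atTop (𝓝 0) := by
      refine squeeze_zero (fun n => P.nonneg _ (hmemA _ (hF1 n))) (fun n => (hF2 n).le) ?_
      exact tendsto_one_div_add_atTop_nhds_zero_nat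
    have hQ := hac F hF1 hP
    have : ε ≤ 0 := ge_of_tendsto' hQ fun n => (hF3 n).le
    linarith
  -- measure density of the cylinder algebra
  have hdense : (Pσ + Qσ).MeasureDense {S | InCylAlg S} :=
    Measure.MeasureDense.of_generateFrom_isSetAlgebra_finite (Pσ + Qσ) inCylAlg_isSetAlgebra
      binSeq_generateFrom
  refine Measure.AbsolutelyContinuous.mk fun s hs hPs => ?_
  have key : ∀ ε : ℝ, 0 < ε → Qσ s ≤ ENNReal.ofReal (2 * ε) := by
    intro ε hε
    obtain ⟨δ, hδ, hδ'⟩ := hed ε hε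
    obtain ⟨t, ht, hst⟩ := hdense.approx s hs (measure_ne_top _ s) (min δ ε) (lt_min hδ hε)
    have hsub1 : t ⊆ s ∪ symmDiff s t := by
      intro x hx
      by_cases hxs : x ∈ s
      · exact Or.inl hxs
      · exact Or.inr (Set.mem_symmDiff.2 (Or.inr ⟨hx, hxs⟩))
    have hsub2 : s ⊆ t ∪ symmDiff s t := by
      intro x hx
      by_cases hxt : x ∈ t
      · exact Or.inl hxt
      · exact Or.inr (Set.mem_symmDiff.2 (Or.inl ⟨hx, hxt⟩))
    have hPsd : Pσ (symmDiff s t) ≤ (Pσ + Qσ) (symmDiff s t) := by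
      simp only [Measure.coe_add, Pi.add_apply]; exact le_self_add
    have hQsd : Qσ (symmDiff s t) ≤ (Pσ + Qσ) (symmDiff s t) := by
      simp only [Measure.coe_add, Pi.add_apply]; exact le_add_self
    have hPt : P.m t < δ := by
      have h1 : Pσ t < ENNReal.ofReal δ := by
        calc Pσ t ≤ Pσ (s ∪ symmDiff s t) := measure_mono hsub1
          _ ≤ Pσ s + Pσ (symmDiff s t) := measure_union_le _ _
          _ = Pσ (symmDiff s t) := by rw [hPs, zero_add]
          _ ≤ (Pσ + Qσ) (symmDiff s t) := hPsd
          _ < ENNReal.ofReal (min δ ε) := hst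
          _ ≤ ENNReal.ofReal δ := ENNReal.ofReal_le_ofReal (min_le_left _ _)
      rw [hPσ t ht] at h1
      exact (ENNReal.ofReal_lt_ofReal_iff hδ).1 h1
    have hQt : Q.m t ≤ ε := hδ' t ht hPt
    calc Qσ s ≤ Qσ (t ∪ symmDiff s t) := measure_mono hsub2
      _ ≤ Qσ t + Qσ (symmDiff s t) := measure_union_le _ _
      _ ≤ ENNReal.ofReal ε + ENNReal.ofReal ε := by
          refine add_le_add ?_ ?_
          · rw [hQσ t ht]; exact ENNReal.ofReal_le_ofReal hQt
          · exact le_trans hQsd (le_trans hst.le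
              (ENNReal.ofReal_le_ofReal (min_le_right _ _)))
      _ = ENNReal.ofReal (2 * ε) := by
          rw [← ENNReal.ofReal_add hε.le hε.le]; ring_nf
  by_contra hne
  have hfin : Qσ s ≠ ⊤ := measure_ne_top _ s
  have hpos : 0 < (Qσ s).toReal := ENNReal.toReal_pos hne hfin
  have := key ((Qσ s).toReal / 4) (by positivity)
  have h2 : ENNReal.ofReal (2 * ((Qσ s).toReal / 4)) < Qσ s := by
    rw [show 2 * ((Qσ s).toReal / 4) = (Qσ s).toReal / 2 by ring]
    calc ENNReal.ofReal ((Qσ s).toReal / 2) < ENNReal.ofReal ((Qσ s).toReal) := by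
          exact ENNReal.ofReal_lt_ofReal_iff hpos |>.2 (by linarith)
      _ = Qσ s := ENNReal.ofReal_toReal hfin
  exact absurd this (not_le.2 h2)
end
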